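/- arXiv:1602.04055 — 3 statements merged into one kernel-verified Lean document; each statement's English description precedes it below -/
import Mathlib

section
/- Let m ≥ 1 and let {Ω_n}_{n≥1} be a sequence of m-dimensional real random vectors satisfying E(exp(⟨Ω_n, s⟩)) = exp(u(s)φ_n + v(s))·(1 + O(κ_n^{-1})) uniformly for s ∈ ℂ^m with ‖s‖ ≤ τ, where u, v are analytic on ‖s‖ ≤ τ and independent of n, φ_n → ∞ and κ_n → ∞. Then the mean vector satisfies E(Ω_n) = ∇u(0)·φ_n + ∇v(0) + O(κ_n^{-1}), where the O-term estimate holds entrywise. -/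
open MeasureTheory Filter Finset Metric

private lemma quasi_aux_dom {τ b y : ℝ} (hbτ : b < τ) :
    |y| * Real.exp (b * |y|) ≤ (1 / (τ - b)) * (Real.exp (y * τ) + Real.exp (y * (-τ))) := by
  have hτb : 0 < τ - b := by linarith
  have h1 : (τ - b) * |y| ≤ Real.exp ((τ - b) * |y|) := by
    linarith [Real.add_one_le_exp ((τ - b) * |y|)]
  have h2 : (τ - b) * (|y| * Real.exp (b * |y|)) ≤ Real.exp (τ * |y|) := by
    calc (τ - b) * (|y| * Real.exp (b * |y|)) = ((τ - b) * |y|) * Real.exp (b * |y|) := by ring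
    _ ≤ Real.exp ((τ - b) * |y|) * Real.exp (b * |y|) :=
        mul_le_mul_of_nonneg_right h1 (Real.exp_pos _).le
    _ = Real.exp (τ * |y|) := by rw [← Real.exp_add]; ring_nf
  have h3 : Real.exp (τ * |y|) ≤ Real.exp (y * τ) + Real.exp (y * (-τ)) := by
    rcases abs_cases y with ⟨h, _⟩ | ⟨h, _⟩
    · rw [h]
      calc Real.exp (τ * y) = Real.exp (y * τ) := by ring_nf
      _ ≤ _ := le_add_of_nonneg_right (Real.exp_pos _).le
    · rw [h]
      calc Real.exp (τ * -y) = Real.exp (y * (-τ)) := by ring_nf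
      _ ≤ _ := le_add_of_nonneg_left (Real.exp_pos _).le
  rw [div_mul_eq_mul_div, le_div_iff₀ hτb]
  nlinarith [h2, h3]

/-- **Mean under the quasi-power assumption** (part of Proposition 2 of Heuberger–Kropf).
If the moment generating functions satisfy the quasi-power expression
`exp(u(s)·φₙ + v(s))·(1 + O(κₙ⁻¹))` uniformly on `‖s‖ ≤ τ`, then the mean vector
satisfies `E(Ωₙ) = ∇u(0)·φₙ + ∇v(0) + O(κₙ⁻¹)` entrywise. -/
theorem quasi_power_mean
    {Ω : Type*} [MeasurableSpace Ω] (μ : Measure Ω) [IsProbabilityMeasure μ]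
    (m : ℕ) (hm : 1 ≤ m)
    (X : ℕ → Ω → Fin m → ℝ)
    (hX : ∀ n, Measurable (X n))
    (τ : ℝ) (hτ : 0 < τ)
    (u v : (Fin m → ℂ) → ℂ)
    (hu : AnalyticOnNhd ℂ u (Metric.closedBall 0 τ))
    (hv : AnalyticOnNhd ℂ v (Metric.closedBall 0 τ))
    (φ κ : ℕ → ℝ)
    (hφ : Tendsto φ atTop atTop)
    (hκ : Tendsto κ atTop atTop)
    (hmgf : ∃ C : ℝ, 0 < C ∧ ∀ᶠ n in atTop, ∀ s : Fin m → ℂ, ‖s‖ ≤ τ →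
      Integrable (fun ω => Complex.exp (∑ ℓ, (X n ω ℓ : ℂ) * s ℓ)) μ ∧
      ‖(∫ ω, Complex.exp (∑ ℓ, (X n ω ℓ : ℂ) * s ℓ) ∂μ)
          - Complex.exp (u s * (φ n : ℂ) + v s)‖
        ≤ C * ‖Complex.exp (u s * (φ n : ℂ) + v s)‖ / κ n)
    -- `gu` and `gv` are the gradients of `u` and `v` at the origin:
    (gu gv : Fin m → ℝ)
    (hgu : ∀ i, fderiv ℂ u 0 (Pi.single i 1) = (gu i : ℂ))
    (hgv : ∀ i, fderiv ℂ v 0 (Pi.single i 1) = (gv i : ℂ)) :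
    ∃ C : ℝ, ∀ᶠ n in atTop,
      (∀ i, Integrable (fun ω => X n ω i) μ) ∧
      ∀ i, |(∫ ω, X n ω i ∂μ) - (gu i * φ n + gv i)| ≤ C / κ n := by
  obtain ⟨C, hC, hev⟩ := hmgf
  refine ⟨6 * C / τ, ?_⟩
  filter_upwards [hev, hκ.eventually_ge_atTop (max 1 (2 * C))] with n hn hκn
  have hκ1 : (1 : ℝ) ≤ κ n := le_trans (le_max_left _ _) hκn
  have hκ0 : (0 : ℝ) < κ n := lt_of_lt_of_le one_pos hκ1
  have hκ2C : 2 * C ≤ κ n := le_trans (le_max_right _ _) hκn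
  have main : ∀ i : Fin m, Integrable (fun ω => X n ω i) μ ∧
      |(∫ ω, X n ω i ∂μ) - (gu i * φ n + gv i)| ≤ 6 * C / τ / κ n := by
    intro i
    set x : Ω → ℝ := fun ω => X n ω i with hxdef
    have hxm : Measurable x := (hX n).eval
    set e : Fin m → ℂ := Pi.single i 1 with hedef
    have he : ‖e‖ = 1 := by rw [hedef, Pi.norm_single]; simp
    set g : ℂ → ℂ := fun z => ∫ ω, Complex.exp ((x ω : ℂ) * z) ∂μ with hgdef
    set F : ℂ → ℂ := fun z => Complex.exp (u (z • e) * (φ n : ℂ) + v (z • e)) with hFdef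
    have hFne : ∀ z : ℂ, F z ≠ 0 := by
      intro z; simp only [hFdef]; exact Complex.exp_ne_zero _
    -- the sliced quasi-power hypothesis
    have hslice : ∀ z : ℂ, ‖z‖ ≤ τ →
        Integrable (fun ω => Complex.exp ((x ω : ℂ) * z)) μ ∧
        ‖g z - F z‖ ≤ C * ‖F z‖ / κ n := by
      intro z hz
      have hnorm : ‖z • e‖ ≤ τ := by rw [norm_smul, he, mul_one]; exact hz
      have h := hn (z • e) hnorm
      have hsum : ∀ ω, (∑ ℓ, (X n ω ℓ : ℂ) * (z • e) ℓ) = (x ω : ℂ) * z := by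
        intro ω
        simp only [hedef, hxdef, Pi.smul_apply, Pi.single_apply, smul_eq_mul,
          mul_ite, mul_one, mul_zero]
        rw [Finset.sum_ite_eq' Finset.univ i (fun ℓ => (X n ω ℓ : ℂ) * z)]
        simp [mul_comm]
      simp only [hgdef, hFdef]
      simpa only [hsum] using h
    -- integrability of real exponentials
    have hIexp : ∀ c : ℝ, |c| ≤ τ → Integrable (fun ω => Real.exp (x ω * c)) μ := by
      intro c hc
      have h := ((hslice (c : ℂ) (by simpa [Complex.norm_real, Real.norm_eq_abs] using hc)).1).norm
      simpa [Complex.norm_exp] using h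
    -- dominating function
    have hdom : ∀ b : ℝ, b < τ →
        Integrable (fun ω => |x ω| * Real.exp (b * |x ω|)) μ := by
      intro b hbτ
      have h1 := hIexp τ (by rw [abs_of_pos hτ])
      have h2 := hIexp (-τ) (by rw [abs_neg, abs_of_pos hτ])
      refine ((h1.add h2).const_mul (1 / (τ - b))).mono'
        ((hxm.abs.mul ((hxm.abs.const_mul b).exp)).aestronglyMeasurable) ?_
      · filter_upwards with ω
        have := quasi_aux_dom (y := x ω) hbτ
        rw [Real.norm_eq_abs, abs_of_nonneg (by positivity)]
        simpa [mul_comm] using this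
    -- derivative of g under the integral sign
    have key : ∀ z₀ : ℂ, ‖z₀‖ < τ →
        Integrable (fun ω => Complex.exp ((x ω : ℂ) * z₀) * (x ω : ℂ)) μ ∧
        HasDerivAt g (∫ ω, Complex.exp ((x ω : ℂ) * z₀) * (x ω : ℂ) ∂μ) z₀ := by
      intro z₀ hz₀
      set ε := (τ - ‖z₀‖) / 2 with hε
      have hε0 : 0 < ε := by rw [hε]; linarith
      set b := ‖z₀‖ + ε with hb
      have hbτ : b < τ := by rw [hb, hε]; linarith
      rw [hgdef]
      refine hasDerivAt_integral_of_dominated_loc_of_deriv_le (ball_mem_nhds z₀ hε0)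
        (F := fun z ω => Complex.exp ((x ω : ℂ) * z))
        (F' := fun z ω => Complex.exp ((x ω : ℂ) * z) * (x ω : ℂ))
        (bound := fun ω => |x ω| * Real.exp (b * |x ω|))
        ?_ ?_ ?_ ?_ ?_ ?_
      · filter_upwards with z
        exact (((Complex.measurable_ofReal.comp hxm).mul_const z).cexp).aestronglyMeasurable
      · exact (hslice z₀ hz₀.le).1
      · exact ((((Complex.measurable_ofReal.comp hxm).mul_const z₀).cexp).mul
          (Complex.measurable_ofReal.comp hxm)).aestronglyMeasurable
      · filter_upwards with ω
        intro z hzball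
        have hzb : ‖z‖ ≤ b := by
          rw [hb]
          have := mem_ball_iff_norm.mp hzball
          calc ‖z‖ ≤ ‖z₀‖ + ‖z - z₀‖ := by
                have := norm_add_le (z - z₀) z₀; simpa [add_comm] using this
          _ ≤ ‖z₀‖ + ε := by linarith
        rw [norm_mul, Complex.norm_exp]
        have hre : ((x ω : ℂ) * z).re = x ω * z.re := by simp
        rw [hre, Complex.norm_real, Real.norm_eq_abs]
        have h4 : x ω * z.re ≤ b * |x ω| := by
          calc x ω * z.re ≤ |x ω * z.re| := le_abs_self _
          _ = |x ω| * |z.re| := abs_mul _ _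
          _ ≤ |x ω| * b := by
              refine mul_le_mul_of_nonneg_left ?_ (abs_nonneg _)
              exact le_trans (Complex.abs_re_le_norm z) hzb
          _ = b * |x ω| := mul_comm _ _
        calc Real.exp (x ω * z.re) * |x ω| ≤ Real.exp (b * |x ω|) * |x ω| :=
              mul_le_mul_of_nonneg_right (Real.exp_le_exp.mpr h4) (abs_nonneg _)
        _ = |x ω| * Real.exp (b * |x ω|) := mul_comm _ _
      · exact hdom b hbτ
      · filter_upwards with ω
        intro z hzball
        have h := ((hasDerivAt_id z).const_mul (x ω : ℂ)).cexp
        simpa using h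
    have hgdiff : DifferentiableOn ℂ g (ball (0 : ℂ) τ) := by
      intro z hz
      exact ((key z (mem_ball_zero_iff.mp hz)).2).differentiableAt.differentiableWithinAt
    have hgx := key 0 (by simpa using hτ)
    have hxintC : Integrable (fun ω => (x ω : ℂ)) μ := by simpa using hgx.1
    have hxint : Integrable x μ := by
      have := hxintC.re
      simpa [RCLike.re_to_complex, Complex.ofReal_re] using this
    have hg0 : HasDerivAt g ((∫ ω, x ω ∂μ : ℝ) : ℂ) 0 := by
      have h := hgx.2
      simp only [mul_zero, Complex.exp_zero, one_mul] at h
      have h2 := Complex.ofRealCLM.integral_comp_comm hxint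
      simp only [Complex.ofRealCLM_apply] at h2
      rwa [h2] at h
    -- differentiability of the F side
    have hmemcb : ∀ z : ℂ, ‖z‖ ≤ τ → z • e ∈ Metric.closedBall (0 : Fin m → ℂ) τ := by
      intro z hz
      rw [Metric.mem_closedBall, dist_zero_right, norm_smul, he, mul_one]; exact hz
    have hS : ∀ z : ℂ, HasDerivAt (fun w : ℂ => w • e) e z := by
      intro z; simpa using (hasDerivAt_id z).smul_const e
    have hudiff : ∀ z : ℂ, ‖z‖ ≤ τ →
        HasDerivAt (fun w => u (w • e)) (fderiv ℂ u (z • e) e) z := by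
      intro z hz
      exact ((hu _ (hmemcb z hz)).differentiableAt.hasFDerivAt).comp_hasDerivAt z (hS z)
    have hvdiff : ∀ z : ℂ, ‖z‖ ≤ τ →
        HasDerivAt (fun w => v (w • e)) (fderiv ℂ v (z • e) e) z := by
      intro z hz
      exact ((hv _ (hmemcb z hz)).differentiableAt.hasFDerivAt).comp_hasDerivAt z (hS z)
    set K : ℂ := (gu i : ℂ) * (φ n : ℂ) + (gv i : ℂ) with hKdef
    have hFderiv : HasDerivAt F (F 0 * K) 0 := by
      have h1 := (hudiff 0 (by simp [hτ.le])).mul_const (φ n : ℂ)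
      have h2 := hvdiff 0 (by simp [hτ.le])
      have h3 := h1.add h2
      rw [hFdef]
      have hgu' := hgu i
      have hgv' := hgv i
      rw [← hedef] at hgu' hgv'
      have h4 : HasDerivAt (fun w : ℂ => u (w • e) * (φ n : ℂ) + v (w • e)) K 0 := by
        rw [zero_smul ℂ e, hgu', hgv'] at h3
        rw [hKdef]
        exact h3
      simpa using h4.cexp
    have hFd : ∀ z : ℂ, ‖z‖ ≤ τ → DifferentiableAt ℂ F z := by
      intro z hz
      have h := (((hudiff z hz).mul_const (φ n : ℂ)).add (hvdiff z hz)).cexp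
      rw [hFdef]
      exact h.differentiableAt
    set f : ℂ → ℂ := fun z => g z / F z - 1 with hfdef
    have hfdiffOn : DifferentiableOn ℂ f (ball (0 : ℂ) τ) := by
      rw [hfdef]
      exact ((hgdiff.div (fun z hz => (hFd z (mem_ball_zero_iff.mp hz).le).differentiableWithinAt)
        (fun z hz => hFne z)).sub (differentiableOn_const 1))
    have hfb : ∀ z : ℂ, ‖z‖ ≤ τ → ‖f z‖ ≤ C / κ n := by
      intro z hz
      have h := (hslice z hz).2
      have hfz : f z = (g z - F z) / F z := by
        simp only [hfdef]
        field_simp [hFne z]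
      rw [hfz, norm_div]
      rw [div_le_iff₀ (norm_pos_iff.mpr (hFne z))]
      calc ‖g z - F z‖ ≤ C * ‖F z‖ / κ n := h
      _ = C / κ n * ‖F z‖ := by ring
    have hmaps : Set.MapsTo f (ball (0 : ℂ) τ) (ball (f 0) (3 * C / κ n)) := by
      intro z hz
      rw [mem_ball]
      have h1 := hfb z (mem_ball_zero_iff.mp hz).le
      have h2 := hfb 0 (by simp [hτ.le])
      have h3 : 0 < C / κ n := div_pos hC hκ0
      have h4 : 3 * C / κ n = 3 * (C / κ n) := by ring
      calc dist (f z) (f 0) ≤ ‖f z‖ + ‖f 0‖ := dist_le_norm_add_norm _ _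
      _ ≤ C / κ n + C / κ n := add_le_add h1 h2
      _ < 3 * C / κ n := by rw [h4]; linarith
    have hd1 : ‖deriv f 0‖ ≤ (3 * C / κ n) / τ :=
      Complex.norm_deriv_le_div_of_mapsTo_ball hfdiffOn (hmaps.mono_right ball_subset_closedBall) hτ
    have hfat0 : HasDerivAt f (deriv f 0) 0 :=
      (hfdiffOn.differentiableAt (isOpen_ball.mem_nhds (mem_ball_self hτ))).hasDerivAt
    have hgF : g = fun z => F z * (f z + 1) := by
      funext z
      simp only [hfdef]
      have h5 : g z / F z - 1 + 1 = g z / F z := by ring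
      rw [h5, mul_comm, div_mul_cancel₀ _ (hFne z)]
    have hgderiv2 : HasDerivAt g (F 0 * K * (f 0 + 1) + F 0 * deriv f 0) 0 := by
      rw [hgF]
      exact hFderiv.mul (hfat0.add_const 1)
    have huniq : ((∫ ω, x ω ∂μ : ℝ) : ℂ) = F 0 * K * (f 0 + 1) + F 0 * deriv f 0 :=
      hg0.unique hgderiv2
    have hg1 : g 0 = 1 := by
      rw [hgdef]; simp
    have h1 : F 0 * (f 0 + 1) = 1 := by
      have := congrFun hgF 0
      rw [hg1] at this
      exact this.symm
    have hfinal : ((∫ ω, x ω ∂μ : ℝ) : ℂ) - K = F 0 * deriv f 0 := by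
      linear_combination huniq + K * h1
    -- bound on ‖F 0‖
    have hCκ : C / κ n ≤ 1 / 2 := by
      rw [div_le_div_iff₀ hκ0 two_pos]; linarith
    have hF0le : ‖F 0‖ ≤ 2 := by
      have hb0' := (hslice 0 (by simp [hτ.le])).2
      rw [hg1] at hb0'
      have h5 : ‖F 0‖ - 1 ≤ ‖(1 : ℂ) - F 0‖ := by
        have := norm_sub_norm_le (F 0) 1
        rw [norm_sub_rev] at this
        simpa using this
      have h6 : C * ‖F 0‖ / κ n ≤ 1 / 2 * ‖F 0‖ := by
        have := mul_le_mul_of_nonneg_right hCκ (norm_nonneg (F 0))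
        calc C * ‖F 0‖ / κ n = C / κ n * ‖F 0‖ := by ring
        _ ≤ 1 / 2 * ‖F 0‖ := this
      linarith
    refine ⟨hxint, ?_⟩
    have hcast : |(∫ ω, x ω ∂μ) - (gu i * φ n + gv i)| =
        ‖((∫ ω, x ω ∂μ : ℝ) : ℂ) - K‖ := by
      rw [← Real.norm_eq_abs, ← Complex.norm_real]
      congr 1
      rw [hKdef]
      push_cast
      ring
    calc |(∫ ω, x ω ∂μ) - (gu i * φ n + gv i)| = ‖((∫ ω, x ω ∂μ : ℝ) : ℂ) - K‖ := hcast
    _ = ‖F 0 * deriv f 0‖ := by rw [hfinal]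
    _ = ‖F 0‖ * ‖deriv f 0‖ := norm_mul _ _
    _ ≤ 2 * (3 * C / κ n / τ) := mul_le_mul hF0le hd1 (norm_nonneg _) (by norm_num)
    _ = 6 * C / τ / κ n := by ring
  exact ⟨fun i => (main i).1, fun i => (main i).2⟩
end

section
/- Let m ≥ 1 and let {Ω_n}_{n≥1} be a sequence of m-dimensional real random vectors satisfying E(exp(⟨Ω_n, s⟩)) = exp(u(s)φ_n + v(s))·(1 + O(κ_n^{-1})) uniformly for s ∈ ℂ^m with ‖s‖ ≤ τ, where u, v are analytic on ‖s‖ ≤ τ and independent of n, φ_n → ∞ and κ_n → ∞. Then the variance–covariance matrix satisfies Cov(Ω_n) = H_u(0)·φ_n + H_v(0) + O(κ_n^{-1}), where the O-term estimate holds entrywise. -/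
open MeasureTheory Filter Finset

open Topology



lemma abs_le_exps {ε : ℝ} (hε : 0 < ε) (t : ℝ) :
    |t| ≤ (Real.exp (ε * t) + Real.exp (-(ε * t))) / ε := by
  rw [le_div_iff₀ hε, mul_comm]
  have h1 : ε * |t| ≤ Real.exp (ε * |t|) := by
    linarith [Real.add_one_le_exp (ε * |t|)]
  have h2 : Real.exp (ε * |t|) ≤ Real.exp (ε * t) + Real.exp (-(ε * t)) := by
    rcases abs_cases t with ⟨h, _⟩ | ⟨h, _⟩
    · rw [h]; linarith [Real.exp_pos (-(ε * t))]
    · rw [h, mul_neg, ← neg_mul]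
      linarith [Real.exp_pos (ε * t), Real.exp_pos (-(ε*t))]
  linarith

lemma sum_mul_single {m : ℕ} (w : Fin m → ℝ) (i j : Fin m) (x y : ℂ) :
    ∑ ℓ, (w ℓ : ℂ) * ((x • (Pi.single i 1 : Fin m → ℂ) + y • (Pi.single j 1 : Fin m → ℂ)) ℓ)
      = x * w i + y * w j := by
  simp only [Pi.add_apply, Pi.smul_apply, smul_eq_mul, mul_add, Finset.sum_add_distrib,
    Pi.single_apply, mul_ite, mul_one, mul_zero, Finset.sum_ite_eq', Finset.mem_univ, if_true]
  ring

lemma norm_smul_single_add {m : ℕ} (i j : Fin m) (x y : ℂ) :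
    ‖x • (Pi.single i 1 : Fin m → ℂ) + y • (Pi.single j 1 : Fin m → ℂ)‖ ≤ ‖x‖ + ‖y‖ := by
  refine (norm_add_le _ _).trans ?_
  rw [norm_smul, norm_smul, Pi.norm_single, Pi.norm_single, norm_one, mul_one, mul_one]

lemma integrable_abs_mul {Ω : Type*} [MeasurableSpace Ω] {μ : Measure Ω} {W V : Ω → ℝ}
    {ε : ℝ} (hε : 0 < ε)
    (hm : AEStronglyMeasurable (fun ω => |W ω| * V ω) μ)
    (hV : ∀ ω, 0 ≤ V ω)
    (h1 : Integrable (fun ω => Real.exp (ε * W ω) * V ω) μ)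
    (h2 : Integrable (fun ω => Real.exp (-(ε * W ω)) * V ω) μ) :
    Integrable (fun ω => |W ω| * V ω) μ := by
  refine (((h1.add h2).div_const ε).mono' hm (Eventually.of_forall fun ω => ?_))
  rw [Real.norm_eq_abs, abs_of_nonneg (mul_nonneg (abs_nonneg _) (hV ω))]
  have := mul_le_mul_of_nonneg_right (abs_le_exps hε (W ω)) (hV ω)
  refine this.trans (le_of_eq ?_)
  simp only [Pi.add_apply]
  ring

lemma hasDerivAt_comp_line {E : Type*} [NormedAddCommGroup E] [NormedSpace ℂ E]
    {f : E → ℂ} {c v : E} {x₀ : ℂ} (hf : DifferentiableAt ℂ f (c + x₀ • v)) :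
    HasDerivAt (fun x => f (c + x • v)) (fderiv ℂ f (c + x₀ • v) v) x₀ := by
  have h1 : HasDerivAt (fun x : ℂ => c + x • v) v x₀ := by
    simpa using ((hasDerivAt_id x₀).smul_const v).const_add c
  exact hf.hasFDerivAt.comp_hasDerivAt x₀ h1

lemma hasDerivAt_comp_line' {E : Type*} [NormedAddCommGroup E] [NormedSpace ℂ E]
    {f : E → ℂ} {c v : E} {x₀ : ℂ} (hf : DifferentiableAt ℂ f (x₀ • v + c)) :
    HasDerivAt (fun x => f (x • v + c)) (fderiv ℂ f (x₀ • v + c) v) x₀ := by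
  have h1 : HasDerivAt (fun x : ℂ => x • v + c) v x₀ := by
    simpa using ((hasDerivAt_id x₀).smul_const v).add_const c
  exact hf.hasFDerivAt.comp_hasDerivAt x₀ h1

lemma hasDerivAt_integral_exp {Ω : Type*} [MeasurableSpace Ω] {μ : Measure Ω}
    {A B W : Ω → ℝ} (hA : Measurable A) (hB : Measurable B) (hW : Measurable W)
    (c x₀ : ℂ) {ε : ℝ} (hε : 0 < ε) {g : Ω → ℝ} (hg : Integrable g μ)
    (hint : Integrable (fun ω => (W ω : ℂ) * Complex.exp (x₀ * A ω + c * B ω)) μ)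
    (hbound : ∀ ω, ∀ x ∈ Metric.ball x₀ ε,
      ‖((W ω * A ω : ℝ) : ℂ) * Complex.exp (x * A ω + c * B ω)‖ ≤ g ω) :
    Integrable (fun ω => ((W ω * A ω : ℝ) : ℂ) * Complex.exp (x₀ * A ω + c * B ω)) μ ∧
    HasDerivAt (fun x : ℂ => ∫ ω, (W ω : ℂ) * Complex.exp (x * A ω + c * B ω) ∂μ)
      (∫ ω, ((W ω * A ω : ℝ) : ℂ) * Complex.exp (x₀ * A ω + c * B ω) ∂μ) x₀ := by
  have hmeas : ∀ x : ℂ, AEStronglyMeasurable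
      (fun ω => (W ω : ℂ) * Complex.exp (x * A ω + c * B ω)) μ := by
    intro x
    exact ((Complex.measurable_ofReal.comp hW).mul
      (Complex.measurable_exp.comp
        ((Complex.measurable_ofReal.comp hA).const_mul x |>.add
          ((Complex.measurable_ofReal.comp hB).const_mul c)))).aestronglyMeasurable
  have hmeas' : AEStronglyMeasurable
      (fun ω => ((W ω * A ω : ℝ) : ℂ) * Complex.exp (x₀ * A ω + c * B ω)) μ := by
    exact ((Complex.measurable_ofReal.comp (hW.mul hA)).mul
      (Complex.measurable_exp.comp
        ((Complex.measurable_ofReal.comp hA).const_mul x₀ |>.add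
          ((Complex.measurable_ofReal.comp hB).const_mul c)))).aestronglyMeasurable
  have key := hasDerivAt_integral_of_dominated_loc_of_deriv_le (μ := μ)
    (F := fun (x : ℂ) ω => (W ω : ℂ) * Complex.exp (x * A ω + c * B ω))
    (F' := fun (x : ℂ) ω => ((W ω * A ω : ℝ) : ℂ) * Complex.exp (x * A ω + c * B ω))
    (x₀ := x₀) (bound := g) (Metric.ball_mem_nhds x₀ hε)
    (Eventually.of_forall hmeas) hint hmeas'
    (Eventually.of_forall fun ω => hbound ω)
    hg
    (Eventually.of_forall fun ω => ?_)
  · exact key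
  · intro x _
    have h1 : HasDerivAt (fun x : ℂ => x * (A ω : ℂ) + c * B ω) (A ω) x := by
      simpa using ((hasDerivAt_id x).mul_const ((A ω : ℂ))).add_const ((c * B ω : ℂ))
    have h2 := (h1.cexp).const_mul ((W ω : ℂ))
    refine h2.congr_deriv ?_
    push_cast
    ring

lemma exp_re_bound {a ε A r : ℝ} (h : |r - a| ≤ ε) :
    Real.exp (r * A) ≤ Real.exp ((a+ε) * A) + Real.exp ((a-ε) * A) := by
  rcases le_or_gt 0 A with hA | hA
  · have : r * A ≤ (a+ε)*A :=
      mul_le_mul_of_nonneg_right (by rcases abs_le.1 h with ⟨h1, h2⟩; linarith) hA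
    exact (Real.exp_le_exp.2 this).trans (le_add_of_nonneg_right (Real.exp_pos _).le)
  · have : r * A ≤ (a-ε)*A := by nlinarith [(abs_le.1 h).1]
    exact (Real.exp_le_exp.2 this).trans (le_add_of_nonneg_left (Real.exp_pos _).le)

lemma hasDerivAt_integral_exp' {Ω : Type*} [MeasurableSpace Ω] {μ : MeasureTheory.Measure Ω}
    {A B W : Ω → ℝ} (hA : Measurable A) (hB : Measurable B) (hW : Measurable W)
    {τ : ℝ} (hτ : 0 < τ) {c x₀ : ℂ} (hc : ‖c‖ ≤ τ/8) (hx₀ : ‖x₀‖ < τ/4)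
    (hWA : ∀ a b : ℝ, |a| + |b| ≤ τ/2 →
      Integrable (fun ω => |W ω| * |A ω| * Real.exp (a * A ω + b * B ω)) μ)
    (hint : Integrable (fun ω => (W ω : ℂ) * Complex.exp (x₀ * A ω + c * B ω)) μ) :
    Integrable (fun ω => ((W ω * A ω : ℝ) : ℂ) * Complex.exp (x₀ * A ω + c * B ω)) μ ∧
    HasDerivAt (fun x : ℂ => ∫ ω, (W ω : ℂ) * Complex.exp (x * A ω + c * B ω) ∂μ)
      (∫ ω, ((W ω * A ω : ℝ) : ℂ) * Complex.exp (x₀ * A ω + c * B ω) ∂μ) x₀ := by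
  have ha : |x₀.re| ≤ τ/4 := le_of_lt (lt_of_le_of_lt (Complex.abs_re_le_norm x₀) hx₀)
  have hb : |c.re| ≤ τ/8 := le_trans (Complex.abs_re_le_norm c) hc
  have hg1 := hWA (x₀.re + τ/8) c.re
    (by have := abs_add_le x₀.re (τ/8); rw [abs_of_pos (by positivity : (0:ℝ) < τ/8)] at this; linarith)
  have hg2 := hWA (x₀.re - τ/8) c.re
    (by have h := abs_sub_abs_le_abs_sub x₀.re (τ/8)
        have h2 : |x₀.re - τ/8| ≤ |x₀.re| + τ/8 := by
          have := abs_sub x₀.re (τ/8)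
          rwa [abs_of_pos (by positivity : (0:ℝ) < τ/8)] at this
        linarith)
  refine hasDerivAt_integral_exp hA hB hW c x₀ (by positivity : (0:ℝ) < τ/8)
    (hg1.add hg2) hint ?_
  intro ω x hx
  have hre : |x.re - x₀.re| ≤ τ/8 := by
    have h1 : ‖x - x₀‖ < τ/8 := by rwa [Metric.mem_ball, dist_eq_norm] at hx
    have h2 : |(x - x₀).re| ≤ ‖x - x₀‖ := Complex.abs_re_le_norm _
    rw [Complex.sub_re] at h2; linarith
  have hnorm : ‖((W ω * A ω : ℝ) : ℂ) * Complex.exp (x * A ω + c * B ω)‖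
      = |W ω * A ω| * Real.exp (x.re * A ω + c.re * B ω) := by
    rw [norm_mul, Complex.norm_real, Real.norm_eq_abs, Complex.norm_exp]
    congr 2
    simp [Complex.add_re, Complex.mul_re]
  rw [hnorm, abs_mul]
  have hbd := exp_re_bound (a := x₀.re) (ε := τ/8) (A := A ω) hre
  have key : Real.exp (x.re * A ω + c.re * B ω)
      ≤ Real.exp ((x₀.re + τ/8) * A ω + c.re * B ω)
        + Real.exp ((x₀.re - τ/8) * A ω + c.re * B ω) := by
    rw [Real.exp_add, Real.exp_add, Real.exp_add, ← add_mul]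
    exact mul_le_mul_of_nonneg_right hbd (Real.exp_pos _).le
  calc |W ω| * |A ω| * Real.exp (x.re * A ω + c.re * B ω)
      ≤ |W ω| * |A ω| * (Real.exp ((x₀.re + τ/8) * A ω + c.re * B ω)
        + Real.exp ((x₀.re - τ/8) * A ω + c.re * B ω)) :=
        mul_le_mul_of_nonneg_left key (by positivity)
    _ = _ := by simp [Pi.add_apply]; ring

open Metric in
set_option maxHeartbeats 1000000 in
lemma quasi_power_core {Ω : Type*} [MeasurableSpace Ω] (μ : Measure Ω) [IsProbabilityMeasure μ]
    {m : ℕ} {Y : Ω → Fin m → ℝ} (hY : Measurable Y) {τ : ℝ} (hτ : 0 < τ)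
    {f : (Fin m → ℂ) → ℂ} (hf : AnalyticOnNhd ℂ f (Metric.closedBall 0 τ))
    (i j : Fin m) {C κ : ℝ} (hC : 0 < C) (hκ1 : 1 ≤ κ) (hκC : 2*C ≤ κ)
    (hmgf : ∀ s : Fin m → ℂ, ‖s‖ ≤ τ →
      Integrable (fun ω => Complex.exp (∑ ℓ, (Y ω ℓ : ℂ) * s ℓ)) μ ∧
      ‖(∫ ω, Complex.exp (∑ ℓ, (Y ω ℓ : ℂ) * s ℓ) ∂μ) - Complex.exp (f s)‖
        ≤ C * ‖Complex.exp (f s)‖ / κ) :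
    Integrable (fun ω => Y ω i) μ ∧ Integrable (fun ω => Y ω i * Y ω j) μ ∧
    ‖((((∫ ω, Y ω i * Y ω j ∂μ) - (∫ ω, Y ω i ∂μ) * (∫ ω, Y ω j ∂μ) : ℝ) : ℂ)
        - fderiv ℂ (fun z => fderiv ℂ f z (Pi.single j 1)) 0 (Pi.single i 1))‖
      ≤ (128*C + 256*C^2) / τ^2 / κ := by
  have hκ0 : (0:ℝ) < κ := lt_of_lt_of_le one_pos hκ1
  have hYi : Measurable fun ω => Y ω i := (measurable_pi_apply i).comp hY
  have hYj : Measurable fun ω => Y ω j := (measurable_pi_apply j).comp hY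
  set ei : Fin m → ℂ := Pi.single i 1 with hei_def
  set ej : Fin m → ℂ := Pi.single j 1 with hej_def
  have hz0 : (0:ℂ) • ei + (0:ℂ) • ej = 0 := by simp
  -- quasi-power hypothesis along the (i,j) plane
  have hM : ∀ x y : ℂ, ‖x‖ + ‖y‖ ≤ τ →
      Integrable (fun ω => Complex.exp (x * Y ω i + y * Y ω j)) μ ∧
      ‖(∫ ω, Complex.exp (x * Y ω i + y * Y ω j) ∂μ)
          - Complex.exp (f (x • ei + y • ej))‖
        ≤ C * ‖Complex.exp (f (x • ei + y • ej))‖ / κ := by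
    intro x y hxy
    have hs : ‖x • ei + y • ej‖ ≤ τ := (norm_smul_single_add i j x y).trans hxy
    have := hmgf _ hs
    simpa only [hei_def, hej_def, sum_mul_single] using this
  -- real exponential integrability
  have hRexp : ∀ a b : ℝ, |a| + |b| ≤ τ →
      Integrable (fun ω => Real.exp (a * Y ω i + b * Y ω j)) μ := by
    intro a b hab
    have h1 := (hM a b (by simpa [Complex.norm_real] using hab)).1.norm
    have e : (fun ω => ‖Complex.exp ((a:ℂ) * Y ω i + (b:ℂ) * Y ω j)‖)
        = fun ω => Real.exp (a * Y ω i + b * Y ω j) := by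
      funext ω
      rw [show ((a:ℂ) * Y ω i + (b:ℂ) * Y ω j)
          = ((a * Y ω i + b * Y ω j : ℝ) : ℂ) by push_cast; ring]
      rw [Complex.norm_exp, Complex.ofReal_re]
    rwa [e] at h1
  -- weighted integrability
  have hAbsI : ∀ a b : ℝ, |a| + |b| + τ/8 ≤ τ →
      Integrable (fun ω => |Y ω i| * Real.exp (a * Y ω i + b * Y ω j)) μ := by
    intro a b hab
    refine integrable_abs_mul (by positivity : (0:ℝ) < τ/8)
      ((hYi.abs.mul (Real.measurable_exp.comp
        ((hYi.const_mul a).add (hYj.const_mul b)))).aestronglyMeasurable)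
      (fun ω => (Real.exp_pos _).le) ?_ ?_
    · refine (hRexp (a + τ/8) b (by
        have := abs_add_le a (τ/8)
        rw [abs_of_pos (by positivity : (0:ℝ) < τ/8)] at this
        linarith)).congr (Eventually.of_forall fun ω => ?_)
      beta_reduce
      rw [show (a + τ/8) * Y ω i + b * Y ω j
          = τ/8 * Y ω i + (a * Y ω i + b * Y ω j) by ring, Real.exp_add]
    · refine (hRexp (a - τ/8) b (by
        have h2 : |a - τ/8| ≤ |a| + τ/8 := by
          have := abs_sub a (τ/8)
          rwa [abs_of_pos (by positivity : (0:ℝ) < τ/8)] at this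
        linarith)).congr (Eventually.of_forall fun ω => ?_)
      beta_reduce
      rw [show (a - τ/8) * Y ω i + b * Y ω j
          = -(τ/8 * Y ω i) + (a * Y ω i + b * Y ω j) by ring, Real.exp_add]
  have hAbsJ : ∀ a b : ℝ, |a| + |b| + τ/8 ≤ τ →
      Integrable (fun ω => |Y ω j| * Real.exp (a * Y ω i + b * Y ω j)) μ := by
    intro a b hab
    refine integrable_abs_mul (by positivity : (0:ℝ) < τ/8)
      ((hYj.abs.mul (Real.measurable_exp.comp
        ((hYi.const_mul a).add (hYj.const_mul b)))).aestronglyMeasurable)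
      (fun ω => (Real.exp_pos _).le) ?_ ?_
    · refine (hRexp a (b + τ/8) (by
        have := abs_add_le b (τ/8)
        rw [abs_of_pos (by positivity : (0:ℝ) < τ/8)] at this
        linarith)).congr (Eventually.of_forall fun ω => ?_)
      beta_reduce
      rw [show a * Y ω i + (b + τ/8) * Y ω j
          = τ/8 * Y ω j + (a * Y ω i + b * Y ω j) by ring, Real.exp_add]
    · refine (hRexp a (b - τ/8) (by
        have h2 : |b - τ/8| ≤ |b| + τ/8 := by
          have := abs_sub b (τ/8)
          rwa [abs_of_pos (by positivity : (0:ℝ) < τ/8)] at this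
        linarith)).congr (Eventually.of_forall fun ω => ?_)
      beta_reduce
      rw [show a * Y ω i + (b - τ/8) * Y ω j
          = -(τ/8 * Y ω j) + (a * Y ω i + b * Y ω j) by ring, Real.exp_add]
  have hAbsJI : ∀ a b : ℝ, |a| + |b| + τ/4 ≤ τ →
      Integrable (fun ω => |Y ω j| * (|Y ω i| * Real.exp (a * Y ω i + b * Y ω j))) μ := by
    intro a b hab
    refine integrable_abs_mul (by positivity : (0:ℝ) < τ/8)
      ((hYj.abs.mul (hYi.abs.mul (Real.measurable_exp.comp
        ((hYi.const_mul a).add (hYj.const_mul b))))).aestronglyMeasurable)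
      (fun ω => mul_nonneg (abs_nonneg _) (Real.exp_pos _).le) ?_ ?_
    · refine (hAbsI a (b + τ/8) (by
        have := abs_add_le b (τ/8)
        rw [abs_of_pos (by positivity : (0:ℝ) < τ/8)] at this
        linarith)).congr (Eventually.of_forall fun ω => ?_)
      beta_reduce
      rw [show a * Y ω i + (b + τ/8) * Y ω j
          = τ/8 * Y ω j + (a * Y ω i + b * Y ω j) by ring, Real.exp_add]
      ring
    · refine (hAbsI a (b - τ/8) (by
        have h2 : |b - τ/8| ≤ |b| + τ/8 := by
          have := abs_sub b (τ/8)
          rwa [abs_of_pos (by positivity : (0:ℝ) < τ/8)] at this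
        linarith)).congr (Eventually.of_forall fun ω => ?_)
      beta_reduce
      rw [show a * Y ω i + (b - τ/8) * Y ω j
          = -(τ/8 * Y ω j) + (a * Y ω i + b * Y ω j) by ring, Real.exp_add]
      ring
  -- derivative of the mgf in the second variable
  have hd_y : ∀ x : ℂ, ‖x‖ ≤ τ/8 → ∀ y₀ : ℂ, ‖y₀‖ < τ/4 →
      HasDerivAt (fun y => ∫ ω, Complex.exp (x * Y ω i + y * Y ω j) ∂μ)
        (∫ ω, (Y ω j : ℂ) * Complex.exp (x * Y ω i + y₀ * Y ω j) ∂μ) y₀ := by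
    intro x hx y₀ hy₀
    have hint : Integrable (fun ω => ((1:ℝ) : ℂ) * Complex.exp (y₀ * Y ω j + x * Y ω i)) μ := by
      refine ((hM x y₀ (by linarith)).1).congr (Eventually.of_forall fun ω => ?_)
      beta_reduce
      push_cast
      rw [one_mul, add_comm]
    have hWA' : ∀ a b : ℝ, |a| + |b| ≤ τ/2 →
        Integrable (fun ω => |(1:ℝ)| * |Y ω j| * Real.exp (a * Y ω j + b * Y ω i)) μ := by
      intro a b hab
      refine (hAbsJ b a (by linarith)).congr (Eventually.of_forall fun ω => ?_)
      beta_reduce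
      rw [abs_one, one_mul, add_comm (b * Y ω i)]
    have key := hasDerivAt_integral_exp' hYj hYi (measurable_const (a := (1:ℝ)))
      hτ (c := x) (x₀ := y₀) hx hy₀ hWA' hint
    have e1 : (fun y : ℂ => ∫ ω, ((1:ℝ):ℂ) * Complex.exp (y * Y ω j + x * Y ω i) ∂μ)
        = fun y => ∫ ω, Complex.exp (x * Y ω i + y * Y ω j) ∂μ := by
      funext y; congr 1; funext ω; push_cast; rw [one_mul, add_comm]
    have e2 : (∫ ω, ((1 * Y ω j : ℝ):ℂ) * Complex.exp (y₀ * Y ω j + x * Y ω i) ∂μ)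
        = ∫ ω, (Y ω j : ℂ) * Complex.exp (x * Y ω i + y₀ * Y ω j) ∂μ := by
      congr 1; funext ω; rw [one_mul, add_comm (y₀ * (Y ω j : ℂ))]
    rw [e1, e2] at key
    exact key.2
  -- derivative of the mgf in the first variable (at second variable 0)
  have hd_x : ∀ x₀ : ℂ, ‖x₀‖ < τ/4 →
      HasDerivAt (fun x => ∫ ω, Complex.exp (x * Y ω i + (0:ℂ) * Y ω j) ∂μ)
        (∫ ω, (Y ω i : ℂ) * Complex.exp (x₀ * Y ω i + (0:ℂ) * Y ω j) ∂μ) x₀ := by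
    intro x₀ hx₀
    have hint : Integrable (fun ω => ((1:ℝ) : ℂ) * Complex.exp (x₀ * Y ω i + (0:ℂ) * Y ω j)) μ := by
      refine ((hM x₀ 0 (by simp only [norm_zero, add_zero]; linarith)).1).congr (Eventually.of_forall fun ω => ?_)
      beta_reduce
      push_cast
      rw [one_mul]
    have hWA' : ∀ a b : ℝ, |a| + |b| ≤ τ/2 →
        Integrable (fun ω => |(1:ℝ)| * |Y ω i| * Real.exp (a * Y ω i + b * Y ω j)) μ := by
      intro a b hab
      refine (hAbsI a b (by linarith)).congr (Eventually.of_forall fun ω => ?_)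
      beta_reduce
      rw [abs_one, one_mul]
    have key := hasDerivAt_integral_exp' hYi hYj (measurable_const (a := (1:ℝ)))
      hτ (c := (0:ℂ)) (x₀ := x₀) (by simp only [norm_zero]; positivity) hx₀ hWA' hint
    have e1 : (fun x : ℂ => ∫ ω, ((1:ℝ):ℂ) * Complex.exp (x * Y ω i + (0:ℂ) * Y ω j) ∂μ)
        = fun x => ∫ ω, Complex.exp (x * Y ω i + (0:ℂ) * Y ω j) ∂μ := by
      funext x; congr 1; funext ω; push_cast; rw [one_mul]
    have e2 : (∫ ω, ((1 * Y ω i : ℝ):ℂ) * Complex.exp (x₀ * Y ω i + (0:ℂ) * Y ω j) ∂μ)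
        = ∫ ω, (Y ω i : ℂ) * Complex.exp (x₀ * Y ω i + (0:ℂ) * Y ω j) ∂μ := by
      congr 1; funext ω; rw [one_mul]
    rw [e1, e2] at key
    exact key.2
  -- derivative of the weighted mgf in the first variable
  have hd_x2 : ∀ x₀ : ℂ, ‖x₀‖ < τ/4 →
      HasDerivAt (fun x => ∫ ω, (Y ω j : ℂ) * Complex.exp (x * Y ω i + (0:ℂ) * Y ω j) ∂μ)
        (∫ ω, ((Y ω j * Y ω i : ℝ) : ℂ) * Complex.exp (x₀ * Y ω i + (0:ℂ) * Y ω j) ∂μ) x₀ := by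
    intro x₀ hx₀
    have hmeas : AEStronglyMeasurable
        (fun ω => (Y ω j : ℂ) * Complex.exp (x₀ * Y ω i + (0:ℂ) * Y ω j)) μ := by
      exact ((Complex.measurable_ofReal.comp hYj).mul
        (Complex.measurable_exp.comp
          (((Complex.measurable_ofReal.comp hYi).const_mul x₀).add
            ((Complex.measurable_ofReal.comp hYj).const_mul 0)))).aestronglyMeasurable
    have hint : Integrable (fun ω => (Y ω j : ℂ) * Complex.exp (x₀ * Y ω i + (0:ℂ) * Y ω j)) μ := by
      have hre : |x₀.re| ≤ τ/4 := (Complex.abs_re_le_norm x₀).trans (le_of_lt hx₀)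
      refine (integrable_norm_iff hmeas).1 ?_
      refine (hAbsJ x₀.re 0 (by simp only [abs_zero, add_zero]; linarith)).congr (Eventually.of_forall fun ω => ?_)
      beta_reduce
      rw [norm_mul, Complex.norm_real, Real.norm_eq_abs, Complex.norm_exp]
      congr 2
      simp [Complex.add_re, Complex.mul_re]
    have hWA' : ∀ a b : ℝ, |a| + |b| ≤ τ/2 →
        Integrable (fun ω => |Y ω j| * |Y ω i| * Real.exp (a * Y ω i + b * Y ω j)) μ := by
      intro a b hab
      refine (hAbsJI a b (by linarith)).congr (Eventually.of_forall fun ω => ?_)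
      beta_reduce
      ring
    have key := hasDerivAt_integral_exp' hYi hYj hYj
      hτ (c := (0:ℂ)) (x₀ := x₀) (by simp only [norm_zero]; positivity) hx₀ hWA' hint
    exact key.2
  -- analytic facts
  have hmem : ∀ x y : ℂ, ‖x‖ + ‖y‖ ≤ τ →
      (x • ei + y • ej) ∈ Metric.closedBall (0 : Fin m → ℂ) τ := by
    intro x y h
    rw [Metric.mem_closedBall, dist_zero_right]
    exact le_trans (by rw [hei_def, hej_def]; exact norm_smul_single_add i j x y) h
  have hg_an : AnalyticOnNhd ℂ (fun z => fderiv ℂ f z ej) (Metric.closedBall 0 τ) := by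
    have := (ContinuousLinearMap.apply ℂ ℂ ej).comp_analyticOnNhd hf.fderiv
    exact this
  have hψ : ∀ x y : ℂ, ‖x‖ + ‖y‖ ≤ τ →
      HasDerivAt (fun y' => f (x • ei + y' • ej))
        (fderiv ℂ f (x • ei + y • ej) ej) y :=
    fun x y h => hasDerivAt_comp_line ((hf _ (hmem x y h)).differentiableAt)
  have hq : ∀ x₀ : ℂ, ‖x₀‖ ≤ τ →
      HasDerivAt (fun x => f (x • ei + (0:ℂ) • ej))
        (fderiv ℂ f (x₀ • ei + (0:ℂ) • ej) ei) x₀ :=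
    fun x₀ h => hasDerivAt_comp_line'
      ((hf _ (hmem x₀ 0 (by simp only [norm_zero, add_zero]; linarith))).differentiableAt)
  have hw : ∀ x₀ : ℂ, ‖x₀‖ ≤ τ →
      HasDerivAt (fun x => fderiv ℂ f (x • ei + (0:ℂ) • ej) ej)
        (fderiv ℂ (fun z => fderiv ℂ f z ej) (x₀ • ei + (0:ℂ) • ej) ei) x₀ :=
    fun x₀ h => hasDerivAt_comp_line'
      ((hg_an _ (hmem x₀ 0 (by simp only [norm_zero, add_zero]; linarith))).differentiableAt)
  -- uniform bound on the normalized error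
  have hB0 : ∀ x y : ℂ, ‖x‖ + ‖y‖ ≤ τ →
      ‖(∫ ω, Complex.exp (x * Y ω i + y * Y ω j) ∂μ)
          * Complex.exp (-(f (x • ei + y • ej))) - 1‖ ≤ C / κ := by
    intro x y h
    have h1 := (hM x y h).2
    have hEf : Complex.exp (f (x • ei + y • ej)) ≠ 0 := Complex.exp_ne_zero _
    have hEfn : (0:ℝ) < ‖Complex.exp (f (x • ei + y • ej))‖ := norm_pos_iff.2 hEf
    have e : (∫ ω, Complex.exp (x * Y ω i + y * Y ω j) ∂μ)
          * Complex.exp (-(f (x • ei + y • ej))) - 1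
        = ((∫ ω, Complex.exp (x * Y ω i + y * Y ω j) ∂μ)
            - Complex.exp (f (x • ei + y • ej)))
          * (Complex.exp (f (x • ei + y • ej)))⁻¹ := by
      rw [Complex.exp_neg]; field_simp
    rw [e, norm_mul, norm_inv]
    calc ‖(∫ ω, Complex.exp (x * Y ω i + y * Y ω j) ∂μ)
            - Complex.exp (f (x • ei + y • ej))‖ * ‖Complex.exp (f (x • ei + y • ej))‖⁻¹
        ≤ (C * ‖Complex.exp (f (x • ei + y • ej))‖ / κ)
            * ‖Complex.exp (f (x • ei + y • ej))‖⁻¹ := by gcongr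
      _ = C / κ := by field_simp
  -- mgf value at 0
  have hM00 : (∫ ω, Complex.exp ((0:ℂ) * Y ω i + (0:ℂ) * Y ω j) ∂μ) = 1 := by
    simp
  -- bound on exp (f 0)
  have ha2 : ‖Complex.exp (f 0)‖ ≤ 2 := by
    have h0 := (hM 0 0 (by simp only [norm_zero, add_zero]; linarith)).2
    rw [hM00, hz0] at h0
    have h2 : ‖Complex.exp (f 0)‖ ≤ ‖(1:ℂ) - Complex.exp (f 0)‖ + 1 := by
      calc ‖Complex.exp (f 0)‖ = ‖(1:ℂ) - ((1:ℂ) - Complex.exp (f 0))‖ := by ring_nf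
        _ ≤ ‖(1:ℂ)‖ + ‖(1:ℂ) - Complex.exp (f 0)‖ := norm_sub_le _ _
        _ = ‖(1:ℂ) - Complex.exp (f 0)‖ + 1 := by rw [norm_one]; ring
    have h3 : C * ‖Complex.exp (f 0)‖ / κ ≤ ‖Complex.exp (f 0)‖ / 2 := by
      rw [div_le_div_iff₀ hκ0 (by norm_num : (0:ℝ) < 2)]
      nlinarith [norm_nonneg (Complex.exp (f 0))]
    linarith
  -- value computations at 0
  have hval1 : (∫ ω, (Y ω i : ℂ) * Complex.exp ((0:ℂ) * Y ω i + (0:ℂ) * Y ω j) ∂μ)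
      = ((∫ ω, Y ω i ∂μ : ℝ) : ℂ) := by
    simp only [zero_mul, add_zero, Complex.exp_zero, mul_one]
    exact integral_ofReal
  have hval2 : (∫ ω, (Y ω j : ℂ) * Complex.exp ((0:ℂ) * Y ω i + (0:ℂ) * Y ω j) ∂μ)
      = ((∫ ω, Y ω j ∂μ : ℝ) : ℂ) := by
    simp only [zero_mul, add_zero, Complex.exp_zero, mul_one]
    exact integral_ofReal
  have hval3 : (∫ ω, ((Y ω j * Y ω i : ℝ) : ℂ) * Complex.exp ((0:ℂ) * Y ω i + (0:ℂ) * Y ω j) ∂μ)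
      = ((∫ ω, Y ω i * Y ω j ∂μ : ℝ) : ℂ) := by
    simp only [zero_mul, add_zero, Complex.exp_zero, mul_one]
    rw [show (fun ω => ((Y ω j * Y ω i : ℝ) : ℂ)) = fun ω => ((Y ω i * Y ω j : ℝ) : ℂ) by
      funext ω; rw [mul_comm]]
    exact integral_ofReal
  -- the inner y-derivative function
  set hfun : ℂ → ℂ := fun x =>
    ((∫ ω, (Y ω j : ℂ) * Complex.exp (x * Y ω i + (0:ℂ) * Y ω j) ∂μ)
      - (∫ ω, Complex.exp (x * Y ω i + (0:ℂ) * Y ω j) ∂μ)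
          * fderiv ℂ f (x • ei + (0:ℂ) • ej) ej)
    * Complex.exp (-(f (x • ei + (0:ℂ) • ej))) with hfun_def
  have hdy0 : ∀ x : ℂ, ‖x‖ ≤ τ/8 →
      HasDerivAt (fun y => (∫ ω, Complex.exp (x * Y ω i + y * Y ω j) ∂μ)
          * Complex.exp (-(f (x • ei + y • ej))) - 1) (hfun x) 0 := by
    intro x hx
    have hd1 := hd_y x hx 0 (by simp only [norm_zero]; positivity)
    have hd2 := ((hψ x 0 (by simp only [norm_zero, add_zero]; linarith)).neg).cexp
    have hd3 := (hd1.mul hd2).sub_const 1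
    refine hd3.congr_deriv ?_
    simp only [hfun_def]
    simp only [Pi.neg_apply, Pi.sub_apply, Pi.mul_apply, zero_smul, zero_add, add_zero]
    ring
  have hK1 : ∀ x : ℂ, ‖x‖ ≤ τ/8 → ‖hfun x‖ ≤ C/κ/(τ/8) := by
    intro x hx
    have hdc : DiffContOnCl ℂ (fun y => (∫ ω, Complex.exp (x * Y ω i + y * Y ω j) ∂μ)
        * Complex.exp (-(f (x • ei + y • ej))) - 1) (Metric.ball 0 (τ/8)) := by
      apply DifferentiableOn.diffContOnCl
      rw [closure_ball (0:ℂ) (by positivity : (τ/8:ℝ) ≠ 0)]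
      intro y hy
      have hy' : ‖y‖ ≤ τ/8 := by simpa [Metric.mem_closedBall, dist_zero_right] using hy
      have hdd1 := (hd_y x hx y (lt_of_le_of_lt hy' (by linarith))).differentiableAt
      have hdd2 := (((hψ x y (by linarith)).neg).cexp).differentiableAt
      exact ((hdd1.mul hdd2).sub (differentiableAt_const 1)).differentiableWithinAt
    have key := Complex.norm_deriv_le_of_forall_mem_sphere_norm_le
      (by positivity : (0:ℝ) < τ/8) hdc (fun z hz => by
        have hz' : ‖z‖ = τ/8 := by rwa [mem_sphere_zero_iff_norm] at hz
        exact hB0 x z (by rw [hz']; linarith))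
    rwa [(hdy0 x hx).deriv] at key
  -- the x-derivative of the lower slice at 0
  have hdx0 : HasDerivAt (fun x => (∫ ω, Complex.exp (x * Y ω i + (0:ℂ) * Y ω j) ∂μ)
      * Complex.exp (-(f (x • ei + (0:ℂ) • ej))) - 1)
      ((((∫ ω, Y ω i ∂μ : ℝ) : ℂ) - fderiv ℂ f 0 ei) * (Complex.exp (f 0))⁻¹) 0 := by
    have hd1 := hd_x 0 (by simp only [norm_zero]; positivity)
    have hd2 := ((hq 0 (by simp only [norm_zero]; linarith)).neg).cexp
    have hd3 := (hd1.mul hd2).sub_const 1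
    refine hd3.congr_deriv ?_
    simp only [Pi.neg_apply, Pi.sub_apply, Pi.mul_apply, zero_smul, zero_add, add_zero]
    simp only [hz0, hval1, hM00, Complex.exp_neg]
    ring
  have hKx : ‖(((∫ ω, Y ω i ∂μ : ℝ) : ℂ) - fderiv ℂ f 0 ei) * (Complex.exp (f 0))⁻¹‖
      ≤ C/κ/(τ/8) := by
    have hdc : DiffContOnCl ℂ (fun x => (∫ ω, Complex.exp (x * Y ω i + (0:ℂ) * Y ω j) ∂μ)
        * Complex.exp (-(f (x • ei + (0:ℂ) • ej))) - 1) (Metric.ball 0 (τ/8)) := by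
      apply DifferentiableOn.diffContOnCl
      rw [closure_ball (0:ℂ) (by positivity : (τ/8:ℝ) ≠ 0)]
      intro x hx
      have hx' : ‖x‖ ≤ τ/8 := by simpa [Metric.mem_closedBall, dist_zero_right] using hx
      have hdd1 := (hd_x x (lt_of_le_of_lt hx' (by linarith))).differentiableAt
      have hdd2 := (((hq x (by linarith)).neg).cexp).differentiableAt
      exact ((hdd1.mul hdd2).sub (differentiableAt_const 1)).differentiableWithinAt
    have key := Complex.norm_deriv_le_of_forall_mem_sphere_norm_le
      (by positivity : (0:ℝ) < τ/8) hdc (fun z hz => by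
        have hz' : ‖z‖ = τ/8 := by rwa [mem_sphere_zero_iff_norm] at hz
        exact hB0 z 0 (by rw [hz', norm_zero]; linarith))
    rwa [hdx0.deriv] at key
  -- value of hfun at 0
  have hdyv : hfun 0 = (((∫ ω, Y ω j ∂μ : ℝ) : ℂ) - fderiv ℂ f 0 ej)
      * (Complex.exp (f 0))⁻¹ := by
    simp only [hfun_def, hz0, hval2, hM00, Complex.exp_neg]
    ring
  -- derivative of hfun at 0
  have hdh : HasDerivAt hfun
      ((((∫ ω, Y ω i * Y ω j ∂μ : ℝ) : ℂ)
          - ((∫ ω, Y ω i ∂μ : ℝ) : ℂ) * fderiv ℂ f 0 ej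
          - fderiv ℂ (fun z => fderiv ℂ f z ej) 0 ei
          - ((((∫ ω, Y ω j ∂μ : ℝ) : ℂ)) - fderiv ℂ f 0 ej) * fderiv ℂ f 0 ei)
        * (Complex.exp (f 0))⁻¹) 0 := by
    have hd1 := hd_x2 0 (by simp only [norm_zero]; positivity)
    have hd2 := hd_x 0 (by simp only [norm_zero]; positivity)
    have hd3 := hw 0 (by simp only [norm_zero]; linarith)
    have hd4 := ((hq 0 (by simp only [norm_zero]; linarith)).neg).cexp
    have hd5 := (hd1.sub (hd2.mul hd3)).mul hd4
    rw [hfun_def]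
    refine hd5.congr_deriv ?_
    simp only [Pi.neg_apply, Pi.sub_apply, Pi.mul_apply, zero_smul, zero_add, add_zero]
    simp only [hz0, hval1, hval2, hval3, hM00, Complex.exp_neg]
    ring
  have hK2 : ‖(((∫ ω, Y ω i * Y ω j ∂μ : ℝ) : ℂ)
          - ((∫ ω, Y ω i ∂μ : ℝ) : ℂ) * fderiv ℂ f 0 ej
          - fderiv ℂ (fun z => fderiv ℂ f z ej) 0 ei
          - ((((∫ ω, Y ω j ∂μ : ℝ) : ℂ)) - fderiv ℂ f 0 ej) * fderiv ℂ f 0 ei)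
        * (Complex.exp (f 0))⁻¹‖ ≤ C/κ/(τ/8)/(τ/8) := by
    have hdc : DiffContOnCl ℂ hfun (Metric.ball 0 (τ/8)) := by
      apply DifferentiableOn.diffContOnCl
      rw [closure_ball (0:ℂ) (by positivity : (τ/8:ℝ) ≠ 0)]
      intro x hx
      have hx' : ‖x‖ ≤ τ/8 := by simpa [Metric.mem_closedBall, dist_zero_right] using hx
      have hxlt : ‖x‖ < τ/4 := lt_of_le_of_lt hx' (by linarith)
      have hdd1 := (hd_x2 x hxlt).differentiableAt
      have hdd2 := (hd_x x hxlt).differentiableAt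
      have hdd3 := (hw x (by linarith)).differentiableAt
      have hdd4 := (((hq x (by linarith)).neg).cexp).differentiableAt
      simp only [hfun_def]
      exact ((hdd1.sub (hdd2.mul hdd3)).mul hdd4).differentiableWithinAt
    have key := Complex.norm_deriv_le_of_forall_mem_sphere_norm_le
      (by positivity : (0:ℝ) < τ/8) hdc (fun z hz => by
        have hz' : ‖z‖ = τ/8 := by rwa [mem_sphere_zero_iff_norm] at hz
        exact hK1 z (le_of_eq hz'))
    rwa [hdh.deriv] at key
  -- integrability of the coordinate functions
  have hInt1 : Integrable (fun ω => Y ω i) μ := by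
    have h0 := hAbsI 0 0 (by simp only [abs_zero, add_zero, zero_add]; linarith)
    have h1 : Integrable (fun ω => |Y ω i|) μ := by
      refine h0.congr (Eventually.of_forall fun ω => ?_)
      beta_reduce
      simp
    refine (integrable_norm_iff hYi.aestronglyMeasurable).1 ?_
    refine h1.congr (Eventually.of_forall fun ω => ?_)
    beta_reduce
    rw [Real.norm_eq_abs]
  have hInt2 : Integrable (fun ω => Y ω i * Y ω j) μ := by
    have h0 := hAbsJI 0 0 (by simp only [abs_zero, add_zero, zero_add]; linarith)
    have h1 : Integrable (fun ω => |Y ω i * Y ω j|) μ := by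
      refine h0.congr (Eventually.of_forall fun ω => ?_)
      beta_reduce
      simp [abs_mul]
      ring
    refine (integrable_norm_iff (hYi.mul hYj).aestronglyMeasurable).1 ?_
    refine h1.congr (Eventually.of_forall fun ω => ?_)
    beta_reduce
    rw [Real.norm_eq_abs]
    rfl
  refine ⟨hInt1, hInt2, ?_⟩
  -- the covariance identity
  have hexp_ne : Complex.exp (f 0) ≠ 0 := Complex.exp_ne_zero _
  have hid : (((∫ ω, Y ω i * Y ω j ∂μ) - (∫ ω, Y ω i ∂μ) * (∫ ω, Y ω j ∂μ) : ℝ) : ℂ)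
      - fderiv ℂ (fun z => fderiv ℂ f z ej) 0 ei
    = Complex.exp (f 0) * ((((∫ ω, Y ω i * Y ω j ∂μ : ℝ) : ℂ)
          - ((∫ ω, Y ω i ∂μ : ℝ) : ℂ) * fderiv ℂ f 0 ej
          - fderiv ℂ (fun z => fderiv ℂ f z ej) 0 ei
          - ((((∫ ω, Y ω j ∂μ : ℝ) : ℂ)) - fderiv ℂ f 0 ej) * fderiv ℂ f 0 ei)
        * (Complex.exp (f 0))⁻¹)
      - (Complex.exp (f 0)) * (Complex.exp (f 0))
        * ((((∫ ω, Y ω i ∂μ : ℝ) : ℂ) - fderiv ℂ f 0 ei) * (Complex.exp (f 0))⁻¹)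
        * ((((∫ ω, Y ω j ∂μ : ℝ) : ℂ) - fderiv ℂ f 0 ej) * (Complex.exp (f 0))⁻¹) := by
    push_cast
    field_simp
    ring
  rw [hid]
  have hbound : ‖Complex.exp (f 0) * ((((∫ ω, Y ω i * Y ω j ∂μ : ℝ) : ℂ)
          - ((∫ ω, Y ω i ∂μ : ℝ) : ℂ) * fderiv ℂ f 0 ej
          - fderiv ℂ (fun z => fderiv ℂ f z ej) 0 ei
          - ((((∫ ω, Y ω j ∂μ : ℝ) : ℂ)) - fderiv ℂ f 0 ej) * fderiv ℂ f 0 ei)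
        * (Complex.exp (f 0))⁻¹)
      - (Complex.exp (f 0)) * (Complex.exp (f 0))
        * ((((∫ ω, Y ω i ∂μ : ℝ) : ℂ) - fderiv ℂ f 0 ei) * (Complex.exp (f 0))⁻¹)
        * ((((∫ ω, Y ω j ∂μ : ℝ) : ℂ) - fderiv ℂ f 0 ej) * (Complex.exp (f 0))⁻¹)‖
      ≤ 2 * (C/κ/(τ/8)/(τ/8)) + 2 * 2 * (C/κ/(τ/8)) * (C/κ/(τ/8)) := by
    refine (norm_sub_le _ _).trans ?_
    have hdyv' : ‖(((∫ ω, Y ω j ∂μ : ℝ) : ℂ) - fderiv ℂ f 0 ej) * (Complex.exp (f 0))⁻¹‖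
        ≤ C/κ/(τ/8) := by
      rw [← hdyv]; exact hK1 0 (by simp only [norm_zero]; positivity)
    have t1 : ‖Complex.exp (f 0) * ((((∫ ω, Y ω i * Y ω j ∂μ : ℝ) : ℂ)
          - ((∫ ω, Y ω i ∂μ : ℝ) : ℂ) * fderiv ℂ f 0 ej
          - fderiv ℂ (fun z => fderiv ℂ f z ej) 0 ei
          - ((((∫ ω, Y ω j ∂μ : ℝ) : ℂ)) - fderiv ℂ f 0 ej) * fderiv ℂ f 0 ei)
        * (Complex.exp (f 0))⁻¹)‖ ≤ 2 * (C/κ/(τ/8)/(τ/8)) := by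
      rw [norm_mul]
      have h1 : 0 ≤ C/κ/(τ/8)/(τ/8) := by positivity
      exact mul_le_mul ha2 hK2 (norm_nonneg _) (by norm_num)
    have t2 : ‖(Complex.exp (f 0)) * (Complex.exp (f 0))
        * ((((∫ ω, Y ω i ∂μ : ℝ) : ℂ) - fderiv ℂ f 0 ei) * (Complex.exp (f 0))⁻¹)
        * ((((∫ ω, Y ω j ∂μ : ℝ) : ℂ) - fderiv ℂ f 0 ej) * (Complex.exp (f 0))⁻¹)‖
        ≤ 2 * 2 * (C/κ/(τ/8)) * (C/κ/(τ/8)) := by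
      rw [norm_mul, norm_mul, norm_mul]
      have hCk : (0:ℝ) ≤ C/κ/(τ/8) := by positivity
      gcongr
      all_goals first
        | exact ha2
        | exact hKx
        | exact hdyv'
    linarith
  refine hbound.trans ?_
  have e1 : 2 * (C/κ/(τ/8)/(τ/8)) + 2 * 2 * (C/κ/(τ/8)) * (C/κ/(τ/8))
      = 128*C/(κ*τ^2) + 256*C^2/(κ^2*τ^2) := by
    field_simp [hκ0.ne', hτ.ne']
    ring
  have e2 : (128*C + 256*C^2) / τ^2 / κ = 128*C/(κ*τ^2) + 256*C^2/(κ*τ^2) := by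
    rw [← add_div, div_div]; ring
  rw [e1, e2]
  have h3 : 256*C^2/(κ^2*τ^2) ≤ 256*C^2/(κ*τ^2) := by
    apply div_le_div_of_nonneg_left (by positivity) (by positivity)
    nlinarith [mul_nonneg (mul_nonneg hκ0.le (sub_nonneg.mpr hκ1)) (sq_nonneg τ)]
  linarith

lemma hessian_combo {m : ℕ} {τ : ℝ} (hτ : 0 < τ) {u v : (Fin m → ℂ) → ℂ}
    (hu : AnalyticOnNhd ℂ u (Metric.closedBall 0 τ))
    (hv : AnalyticOnNhd ℂ v (Metric.closedBall 0 τ))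
    (c : ℂ) (i j : Fin m) :
    fderiv ℂ (fun z => fderiv ℂ (fun z => u z * c + v z) z (Pi.single j 1)) 0 (Pi.single i 1)
      = c * fderiv ℂ (fun z => fderiv ℂ u z (Pi.single j 1)) 0 (Pi.single i 1)
        + fderiv ℂ (fun z => fderiv ℂ v z (Pi.single j 1)) 0 (Pi.single i 1) := by
  have hball : Metric.ball (0 : Fin m → ℂ) τ ∈ 𝓝 (0 : Fin m → ℂ) := Metric.ball_mem_nhds 0 hτ
  have hev : (fun z => fderiv ℂ (fun z => u z * c + v z) z (Pi.single j 1))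
      =ᶠ[𝓝 (0 : Fin m → ℂ)]
      (fun z => c * fderiv ℂ u z (Pi.single j 1) + fderiv ℂ v z (Pi.single j 1)) := by
    filter_upwards [hball] with z hz
    have hz' : z ∈ Metric.closedBall (0 : Fin m → ℂ) τ := Metric.ball_subset_closedBall hz
    have hud : DifferentiableAt ℂ u z := (hu z hz').differentiableAt
    have hvd : DifferentiableAt ℂ v z := (hv z hz').differentiableAt
    have e : fderiv ℂ (fun z => u z * c + v z) z = c • fderiv ℂ u z + fderiv ℂ v z := by
      rw [fderiv_fun_add (hud.mul_const c) hvd, fderiv_mul_const hud]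
    rw [e]
    simp [smul_eq_mul]
  rw [hev.fderiv_eq]
  have hu' : DifferentiableAt ℂ (fun z => fderiv ℂ u z (Pi.single j 1)) 0 :=
    (((ContinuousLinearMap.apply ℂ ℂ (Pi.single j 1 : Fin m → ℂ)).comp_analyticOnNhd hu.fderiv)
      0 (Metric.mem_closedBall_self hτ.le)).differentiableAt
  have hv' : DifferentiableAt ℂ (fun z => fderiv ℂ v z (Pi.single j 1)) 0 :=
    (((ContinuousLinearMap.apply ℂ ℂ (Pi.single j 1 : Fin m → ℂ)).comp_analyticOnNhd hv.fderiv)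
      0 (Metric.mem_closedBall_self hτ.le)).differentiableAt
  rw [fderiv_fun_add (hu'.const_mul c) hv', fderiv_const_mul hu']
  simp [smul_eq_mul]


/-- **Variance–covariance matrix under the quasi-power assumption**
(part of Proposition 2 of Heuberger–Kropf).
If the moment generating functions satisfy the quasi-power expression
`exp(u(s)·φₙ + v(s))·(1 + O(κₙ⁻¹))` uniformly on `‖s‖ ≤ τ`, then the
variance–covariance matrix satisfies `Cov(Ωₙ) = H_u(0)·φₙ + H_v(0) + O(κₙ⁻¹)`
entrywise, where `H_u(0)` and `H_v(0)` are the Hessians of `u` and `v` at `0`. -/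
theorem quasi_power_covariance
    {Ω : Type*} [MeasurableSpace Ω] (μ : Measure Ω) [IsProbabilityMeasure μ]
    (m : ℕ) (hm : 1 ≤ m)
    (X : ℕ → Ω → Fin m → ℝ)
    (hX : ∀ n, Measurable (X n))
    (τ : ℝ) (hτ : 0 < τ)
    (u v : (Fin m → ℂ) → ℂ)
    (hu : AnalyticOnNhd ℂ u (Metric.closedBall 0 τ))
    (hv : AnalyticOnNhd ℂ v (Metric.closedBall 0 τ))
    (φ κ : ℕ → ℝ)
    (hφ : Tendsto φ atTop atTop)
    (hκ : Tendsto κ atTop atTop)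
    (hmgf : ∃ C : ℝ, 0 < C ∧ ∀ᶠ n in atTop, ∀ s : Fin m → ℂ, ‖s‖ ≤ τ →
      Integrable (fun ω => Complex.exp (∑ ℓ, (X n ω ℓ : ℂ) * s ℓ)) μ ∧
      ‖(∫ ω, Complex.exp (∑ ℓ, (X n ω ℓ : ℂ) * s ℓ) ∂μ)
          - Complex.exp (u s * (φ n : ℂ) + v s)‖
        ≤ C * ‖Complex.exp (u s * (φ n : ℂ) + v s)‖ / κ n)
    -- `Su` and `Sv` are the Hessians of `u` and `v` at the origin:
    (Su Sv : Matrix (Fin m) (Fin m) ℝ)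
    (hSu : ∀ i j, fderiv ℂ (fun z => fderiv ℂ u z (Pi.single j 1)) 0 (Pi.single i 1)
      = (Su i j : ℂ))
    (hSv : ∀ i j, fderiv ℂ (fun z => fderiv ℂ v z (Pi.single j 1)) 0 (Pi.single i 1)
      = (Sv i j : ℂ)) :
    ∃ C : ℝ, ∀ᶠ n in atTop,
      (∀ i, Integrable (fun ω => X n ω i) μ) ∧
      (∀ i j, Integrable (fun ω => X n ω i * X n ω j) μ) ∧
      ∀ i j,
        |((∫ ω, X n ω i * X n ω j ∂μ) - (∫ ω, X n ω i ∂μ) * (∫ ω, X n ω j ∂μ))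
            - (Su i j * φ n + Sv i j)|
          ≤ C / κ n := by
  obtain ⟨C, hCpos, hev⟩ := hmgf
  refine ⟨(128*C + 256*C^2) / τ^2, ?_⟩
  filter_upwards [hev, hκ.eventually_ge_atTop 1, hκ.eventually_ge_atTop (2*C)]
    with n hn hκ1 hκ2
  have hfa : AnalyticOnNhd ℂ (fun z => u z * (φ n : ℂ) + v z) (Metric.closedBall 0 τ) :=
    (hu.mul analyticOnNhd_const).add hv
  have core := fun (i j : Fin m) =>
    quasi_power_core μ (hX n) hτ hfa i j hCpos hκ1 hκ2 hn
  refine ⟨fun i => (core i i).1, fun i j => (core i j).2.1, fun i j => ?_⟩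
  have h := (core i j).2.2
  rw [hessian_combo hτ hu hv ((φ n : ℝ) : ℂ) i j, hSu i j, hSv i j] at h
  have e : ‖((((∫ ω, X n ω i * X n ω j ∂μ)
        - (∫ ω, X n ω i ∂μ) * (∫ ω, X n ω j ∂μ) : ℝ) : ℂ)
        - (((φ n : ℝ) : ℂ) * (Su i j : ℂ) + (Sv i j : ℂ)))‖
      = |((∫ ω, X n ω i * X n ω j ∂μ) - (∫ ω, X n ω i ∂μ) * (∫ ω, X n ω j ∂μ))
          - (Su i j * φ n + Sv i j)| := by
    rw [show (((φ n : ℝ) : ℂ) * (Su i j : ℂ) + (Sv i j : ℂ))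
        = ((Su i j * φ n + Sv i j : ℝ) : ℂ) by push_cast; ring,
      ← Complex.ofReal_sub, Complex.norm_real, Real.norm_eq_abs]
  rw [e] at h
  exact h
end

section
/- Let m ≥ 1 and let X and Y be m-dimensional random vectors with characteristic functions φ_X and φ_Y, and let T > 0. If both E(X) and E(Y) exist (i.e. X and Y are integrable), then the integral ∫_{‖t‖≤T} |(Λ(φ_X)(t) − Λ(φ_Y)(t)) / (t_1 t_2 ⋯ t_m)| dt is finite, where ‖t‖ is the maximum norm on ℝ^m. -/
open MeasureTheory Filter Finset
open scoped ENNReal NNReal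

/-- The finset of all set partitions of `Fin m`, encoded as finsets of nonempty,
pairwise disjoint parts whose union is all of `Fin m`. -/
def setPartitions (m : ℕ) : Finset (Finset (Finset (Fin m))) :=
  Finset.univ.filter fun P =>
    (∅ : Finset (Fin m)) ∉ P ∧
    (∀ J ∈ P, ∀ K ∈ P, J ≠ K → Disjoint J K) ∧
    P.biUnion id = Finset.univ

/-- Sadikova's operator `Λ` in dimension `m`:
`Λ(h) = ∑_{α ∈ Π_L} (-1)^{|α|-1} (|α|-1)! ∏_{J ∈ α} h ∘ ψ_{J,L}`, where `ψ_{J,L}`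
sets all coordinates outside `J` to zero, and the sum is over all set partitions `α`
of `L = {1, …, m}`. -/
noncomputable def sadikovaLambda {m : ℕ} (h : (Fin m → ℝ) → ℂ) (t : Fin m → ℝ) : ℂ :=
  ∑ P ∈ setPartitions m,
    (-1 : ℂ) ^ (P.card - 1) * (Nat.factorial (P.card - 1) : ℂ) *
      ∏ J ∈ P, h fun k => if k ∈ J then t k else 0

/-- The characteristic function `φ_Z(t) = E(exp(i⟨t, Z⟩))` of a random vector `Z`. -/
noncomputable def charFn {Ω : Type*} [MeasurableSpace Ω] (μ : Measure Ω)
    {m : ℕ} (Z : Ω → Fin m → ℝ) (t : Fin m → ℝ) : ℂ :=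
  ∫ ω, Complex.exp (Complex.I * ∑ k, (t k : ℂ) * (Z ω k : ℂ)) ∂μ

def finParts (m : ℕ) (u : Finset (Fin m)) : Finset (Finset (Finset (Fin m))) :=
  Finset.univ.filter fun P =>
    (∅ : Finset (Fin m)) ∉ P ∧
    (∀ J ∈ P, ∀ K ∈ P, J ≠ K → Disjoint J K) ∧
    P.biUnion id = u

lemma mem_finParts {m : ℕ} {u : Finset (Fin m)} {P : Finset (Finset (Fin m))} :
    P ∈ finParts m u ↔ (∅ : Finset (Fin m)) ∉ P ∧
      (∀ J ∈ P, ∀ K ∈ P, J ≠ K → Disjoint J K) ∧ P.biUnion id = u := by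
  simp [finParts]

lemma setPartitions_eq (m : ℕ) : setPartitions m = finParts m Finset.univ := rfl

lemma biUnion_part {m : ℕ} {P : Finset (Finset (Fin m))}
    (hd : ∀ J ∈ P, ∀ K ∈ P, J ≠ K → Disjoint J K) {J₀ : Finset (Fin m)} (hJ₀ : J₀ ∈ P)
    {k : Fin m} (hk : k ∈ J₀) :
    (P.biUnion fun J => if k ∈ J then J else ∅) = J₀ := by
  ext l
  simp only [Finset.mem_biUnion]
  constructor
  · rintro ⟨J, hJ, hl⟩
    by_cases hkJ : k ∈ J
    · rw [if_pos hkJ] at hl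
      rcases eq_or_ne J J₀ with rfl | hne
      · exact hl
      · exact absurd (Finset.disjoint_left.1 (hd J hJ J₀ hJ₀ hne) hkJ) (by simp [hk])
    · rw [if_neg hkJ] at hl; simp at hl
  · intro hl
    exact ⟨J₀, hJ₀, by rw [if_pos hk]; exact hl⟩

lemma biUnion_erase_part {m : ℕ} {P : Finset (Finset (Fin m))}
    (hd : ∀ J ∈ P, ∀ K ∈ P, J ≠ K → Disjoint J K) (hPu : P.biUnion id = Finset.univ)
    {J₀ : Finset (Fin m)} (hJ₀ : J₀ ∈ P) :
    (P.erase J₀).biUnion id = Finset.univ \ J₀ := by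
  ext l
  simp only [Finset.mem_biUnion, Finset.mem_erase, Finset.mem_sdiff, Finset.mem_univ, true_and,
    id]
  constructor
  · rintro ⟨K, ⟨hKne, hK⟩, hl⟩
    exact fun hlJ₀ => Finset.disjoint_left.1 (hd K hK J₀ hJ₀ hKne) hl hlJ₀
  · intro hl
    have : l ∈ P.biUnion id := hPu ▸ Finset.mem_univ l
    obtain ⟨K, hK, hlK⟩ := Finset.mem_biUnion.1 this
    exact ⟨K, ⟨fun hc => hl (hc ▸ hlK), hK⟩, hlK⟩
def sadE {m : ℕ} (k : Fin m) (x : Σ _ : Finset (Finset (Fin m)), Finset (Fin m)) :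
    Finset (Finset (Fin m)) :=
  if x.2 = ∅ then insert {k} x.1 else insert (insert k x.2) (x.1.erase x.2)

def sadR {m : ℕ} (k : Fin m) (P : Finset (Finset (Fin m))) :
    Σ _ : Finset (Finset (Fin m)), Finset (Fin m) :=
  if (P.biUnion fun J => if k ∈ J then J else ∅) = {k} then
    ⟨P.erase (P.biUnion fun J => if k ∈ J then J else ∅), ∅⟩
  else
    ⟨insert ((P.biUnion fun J => if k ∈ J then J else ∅).erase k)
        (P.erase (P.biUnion fun J => if k ∈ J then J else ∅)),
      (P.biUnion fun J => if k ∈ J then J else ∅).erase k⟩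

lemma notMem_of_mem_finParts_erase {m : ℕ} {k : Fin m} {Q : Finset (Finset (Fin m))}
    (hQ : Q ∈ finParts m (Finset.univ.erase k)) {K : Finset (Fin m)} (hK : K ∈ Q) :
    k ∉ K := by
  intro hkK
  have h1 := (mem_finParts.1 hQ).2.2
  have h2 : K ⊆ Finset.univ.erase k := h1 ▸ Finset.subset_biUnion_of_mem id hK
  exact Finset.notMem_erase k Finset.univ (h2 hkK)

lemma sadE_mem {m : ℕ} {k : Fin m} {Q : Finset (Finset (Fin m))} {J : Finset (Fin m)}
    (hQ : Q ∈ finParts m (Finset.univ.erase k)) (hJ : J ∈ insert ∅ Q) :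
    sadE k ⟨Q, J⟩ ∈ setPartitions m := by
  classical
  obtain ⟨hQ0, hQd, hQu⟩ := mem_finParts.1 hQ
  rw [setPartitions_eq, mem_finParts]
  rcases Finset.mem_insert.1 hJ with rfl | hJQ
  · have hE : sadE k ⟨Q, (∅ : Finset (Fin m))⟩ = insert {k} Q := by simp [sadE]
    rw [hE]
    refine ⟨?_, ?_, ?_⟩
    · intro hc
      rcases Finset.mem_insert.1 hc with hc | hc
      · exact absurd hc.symm (Finset.singleton_ne_empty k)
      · exact hQ0 hc
    · intro A hA B hB hAB
      rcases Finset.mem_insert.1 hA with rfl | hA <;>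
        rcases Finset.mem_insert.1 hB with rfl | hB
      · exact absurd rfl hAB
      · exact Finset.disjoint_singleton_left.2 (notMem_of_mem_finParts_erase hQ hB)
      · exact (Finset.disjoint_singleton_left.2 (notMem_of_mem_finParts_erase hQ hA)).symm
      · exact hQd A hA B hB hAB
    · rw [Finset.biUnion_insert, hQu]
      show {k} ∪ Finset.univ.erase k = Finset.univ
      rw [← Finset.insert_eq, Finset.insert_erase (Finset.mem_univ k)]
  · have hJne : J ≠ ∅ := fun hc => hQ0 (hc ▸ hJQ)
    have hE : sadE k ⟨Q, J⟩ = insert (insert k J) (Q.erase J) := by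
      simp [sadE, if_neg hJne]
    rw [hE]
    have hkJ : k ∉ J := notMem_of_mem_finParts_erase hQ hJQ
    refine ⟨?_, ?_, ?_⟩
    · intro hc
      rcases Finset.mem_insert.1 hc with hc | hc
      · exact absurd hc.symm (Finset.insert_ne_empty k J)
      · exact hQ0 (Finset.mem_of_mem_erase hc)
    · intro A hA B hB hAB
      rcases Finset.mem_insert.1 hA with rfl | hA <;>
        rcases Finset.mem_insert.1 hB with rfl | hB
      · exact absurd rfl hAB
      · have hB' := Finset.mem_of_mem_erase hB
        have hBJ : B ≠ J := Finset.ne_of_mem_erase hB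
        rw [Finset.insert_eq, Finset.disjoint_union_left]
        exact ⟨Finset.disjoint_singleton_left.2 (notMem_of_mem_finParts_erase hQ hB'),
          hQd J hJQ B hB' (Ne.symm hBJ)⟩
      · have hA' := Finset.mem_of_mem_erase hA
        have hAJ : A ≠ J := Finset.ne_of_mem_erase hA
        rw [Finset.insert_eq, Finset.disjoint_union_right]
        exact ⟨Finset.disjoint_singleton_right.2 (notMem_of_mem_finParts_erase hQ hA'),
          hQd A hA' J hJQ hAJ⟩
      · exact hQd A (Finset.mem_of_mem_erase hA) B (Finset.mem_of_mem_erase hB) hAB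
    · rw [Finset.biUnion_insert]
      show insert k J ∪ (Q.erase J).biUnion id = Finset.univ
      rw [Finset.insert_eq k J, Finset.union_assoc]
      have h2 : J ∪ (Q.erase J).biUnion id = Q.biUnion id := by
        conv_rhs => rw [← Finset.insert_erase hJQ]
        rw [Finset.biUnion_insert]
        rfl
      rw [h2, hQu, ← Finset.insert_eq, Finset.insert_erase (Finset.mem_univ k)]
lemma erase_k_nonempty {m : ℕ} {k : Fin m} {J₀ : Finset (Fin m)} (hk : k ∈ J₀)
    (hne : J₀ ≠ {k}) : (J₀.erase k).Nonempty := by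
  rcases Finset.eq_empty_or_nonempty (J₀.erase k) with hc | h
  · exact absurd (by
      ext l
      simp only [Finset.mem_singleton]
      constructor
      · intro hl
        by_contra hlk
        have : l ∈ J₀.erase k := Finset.mem_erase.2 ⟨hlk, hl⟩
        simp [hc] at this
      · rintro rfl; exact hk) hne
  · exact h

lemma sadR_mem {m : ℕ} {k : Fin m} {P : Finset (Finset (Fin m))}
    (hP : P ∈ setPartitions m) :
    sadR k P ∈ (finParts m (Finset.univ.erase k)).sigma
      (fun Q => insert (∅ : Finset (Fin m)) Q) := by
  classical
  rw [setPartitions_eq] at hP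
  obtain ⟨hP0, hPd, hPu⟩ := mem_finParts.1 hP
  have hkP : k ∈ P.biUnion id := hPu ▸ Finset.mem_univ k
  obtain ⟨J₀, hJ₀P, hkJ₀⟩ := Finset.mem_biUnion.1 hkP
  have hB : (P.biUnion fun J => if k ∈ J then J else ∅) = J₀ := biUnion_part hPd hJ₀P hkJ₀
  have hkfree : ∀ K ∈ P.erase J₀, k ∉ K := by
    intro K hK hkK
    have hKJ₀ : K ≠ J₀ := Finset.ne_of_mem_erase hK
    exact Finset.disjoint_left.1 (hPd K (Finset.mem_of_mem_erase hK) J₀ hJ₀P hKJ₀) hkK hkJ₀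
  have hbue : (P.erase J₀).biUnion id = Finset.univ \ J₀ := biUnion_erase_part hPd hPu hJ₀P
  rw [Finset.mem_sigma]
  by_cases hc : J₀ = {k}
  · have hRe : sadR k P = ⟨P.erase J₀, ∅⟩ := by
      simp only [sadR, hB, if_pos hc]
    rw [hRe]
    refine ⟨mem_finParts.2 ⟨fun hc' => hP0 (Finset.mem_of_mem_erase hc'), ?_, ?_⟩,
      Finset.mem_insert_self _ _⟩
    · intro A hA B hB' hAB
      exact hPd A (Finset.mem_of_mem_erase hA) B (Finset.mem_of_mem_erase hB') hAB
    · rw [hbue, hc]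
      ext l; simp [Finset.mem_erase, and_comm]
  · have hRe : sadR k P = ⟨insert (J₀.erase k) (P.erase J₀), J₀.erase k⟩ := by
      simp only [sadR, hB, if_neg hc]
    rw [hRe]
    have hJne : (J₀.erase k).Nonempty := erase_k_nonempty hkJ₀ hc
    refine ⟨mem_finParts.2 ⟨?_, ?_, ?_⟩, Finset.mem_insert_of_mem (Finset.mem_insert_self _ _)⟩
    · intro hc'
      rcases Finset.mem_insert.1 hc' with hc' | hc'
      · exact absurd hc'.symm (Finset.nonempty_iff_ne_empty.1 hJne)
      · exact hP0 (Finset.mem_of_mem_erase hc')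
    · intro A hA B hB' hAB
      rcases Finset.mem_insert.1 hA with rfl | hA <;>
        rcases Finset.mem_insert.1 hB' with rfl | hB'
      · exact absurd rfl hAB
      · exact ((hPd J₀ hJ₀P B (Finset.mem_of_mem_erase hB')
          (Ne.symm (Finset.ne_of_mem_erase hB'))).mono_left (Finset.erase_subset _ _))
      · exact ((hPd J₀ hJ₀P A (Finset.mem_of_mem_erase hA)
          (Ne.symm (Finset.ne_of_mem_erase hA))).mono_left (Finset.erase_subset _ _)).symm
      · exact hPd A (Finset.mem_of_mem_erase hA) B (Finset.mem_of_mem_erase hB') hAB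
    · rw [Finset.biUnion_insert]
      show J₀.erase k ∪ (P.erase J₀).biUnion id = Finset.univ.erase k
      rw [hbue]
      ext l
      simp only [Finset.mem_union, Finset.mem_erase, Finset.mem_sdiff, Finset.mem_univ, true_and,
        and_true]
      constructor
      · rintro (⟨hlk, _⟩ | hl)
        · exact hlk
        · rintro rfl; exact hl hkJ₀
      · intro hlk
        by_cases hlJ : l ∈ J₀
        · exact Or.inl ⟨hlk, hlJ⟩
        · exact Or.inr hlJ

lemma sadR_sadE {m : ℕ} {k : Fin m} {Q : Finset (Finset (Fin m))} {J : Finset (Fin m)}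
    (hQ : Q ∈ finParts m (Finset.univ.erase k)) (hJ : J ∈ insert ∅ Q) :
    sadR k (sadE k ⟨Q, J⟩) = ⟨Q, J⟩ := by
  classical
  obtain ⟨hQ0, hQd, hQu⟩ := mem_finParts.1 hQ
  have hPd := (mem_finParts.1 (by rw [← setPartitions_eq]; exact
    (setPartitions_eq m ▸ sadE_mem hQ hJ))).2.1
  rcases Finset.mem_insert.1 hJ with rfl | hJQ
  · have hE : sadE k ⟨Q, (∅ : Finset (Fin m))⟩ = insert {k} Q := by simp [sadE]
    rw [hE] at hPd ⊢
    have hmem : ({k} : Finset (Fin m)) ∈ insert ({k} : Finset (Fin m)) Q :=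
      Finset.mem_insert_self _ _
    have hB : ((insert {k} Q).biUnion fun J => if k ∈ J then J else ∅) = {k} :=
      biUnion_part hPd hmem (Finset.mem_singleton_self k)
    have hkQ : ({k} : Finset (Fin m)) ∉ Q := by
      intro hc
      exact notMem_of_mem_finParts_erase hQ hc (Finset.mem_singleton_self k)
    simp only [sadR, hB, if_pos rfl, Finset.erase_insert hkQ, if_true]
  · have hJne : J ≠ ∅ := fun hc => hQ0 (hc ▸ hJQ)
    have hkJ : k ∉ J := notMem_of_mem_finParts_erase hQ hJQ
    have hE : sadE k ⟨Q, J⟩ = insert (insert k J) (Q.erase J) := by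
      simp [sadE, if_neg hJne]
    rw [hE] at hPd ⊢
    have hmem : insert k J ∈ insert (insert k J) (Q.erase J) := Finset.mem_insert_self _ _
    have hB : ((insert (insert k J) (Q.erase J)).biUnion fun K => if k ∈ K then K else ∅)
        = insert k J := biUnion_part hPd hmem (Finset.mem_insert_self _ _)
    have hne : insert k J ≠ {k} := by
      intro hc
      obtain ⟨l, hl⟩ := Finset.nonempty_iff_ne_empty.2 hJne
      have : l ∈ insert k J := Finset.mem_insert_of_mem hl
      rw [hc, Finset.mem_singleton] at this
      exact hkJ (this ▸ hl)
    have hkin : insert k J ∉ Q.erase J := by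
      intro hc
      exact notMem_of_mem_finParts_erase hQ (Finset.mem_of_mem_erase hc)
        (Finset.mem_insert_self _ _)
    simp only [sadR, hB, if_neg hne, Finset.erase_insert hkJ, Finset.erase_insert hkin,
      Finset.insert_erase hJQ]

lemma sadE_sadR {m : ℕ} {k : Fin m} {P : Finset (Finset (Fin m))}
    (hP : P ∈ setPartitions m) : sadE k (sadR k P) = P := by
  classical
  rw [setPartitions_eq] at hP
  obtain ⟨hP0, hPd, hPu⟩ := mem_finParts.1 hP
  have hkP : k ∈ P.biUnion id := hPu ▸ Finset.mem_univ k
  obtain ⟨J₀, hJ₀P, hkJ₀'⟩ := Finset.mem_biUnion.1 hkP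
  have hkJ₀ : k ∈ J₀ := hkJ₀'
  have hB : (P.biUnion fun J => if k ∈ J then J else ∅) = J₀ := biUnion_part hPd hJ₀P hkJ₀
  by_cases hc : J₀ = {k}
  · have hRe : sadR k P = ⟨P.erase J₀, ∅⟩ := by simp only [sadR, hB, if_pos hc]
    rw [hRe]
    have : sadE k ⟨P.erase J₀, (∅ : Finset (Fin m))⟩ = insert {k} (P.erase J₀) := by
      simp [sadE]
    rw [this, ← hc, Finset.insert_erase hJ₀P]
  · have hJne : (J₀.erase k).Nonempty := erase_k_nonempty hkJ₀ hc
    have hRe : sadR k P = ⟨insert (J₀.erase k) (P.erase J₀), J₀.erase k⟩ := by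
      simp only [sadR, hB, if_neg hc]
    rw [hRe]
    have hnotin : J₀.erase k ∉ P.erase J₀ := by
      intro hmem
      obtain ⟨l, hl⟩ := hJne
      have hlJ₀ : l ∈ J₀ := Finset.mem_of_mem_erase hl
      have hne : J₀.erase k ≠ J₀ := fun hc' =>
        Finset.notMem_erase k J₀ (by rw [hc']; exact hkJ₀)
      exact Finset.disjoint_left.1
        (hPd _ (Finset.mem_of_mem_erase hmem) J₀ hJ₀P (Finset.ne_of_mem_erase hmem)) hl hlJ₀
    have hE : sadE k ⟨insert (J₀.erase k) (P.erase J₀), J₀.erase k⟩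
        = insert (insert k (J₀.erase k)) ((insert (J₀.erase k) (P.erase J₀)).erase (J₀.erase k)) := by
      simp [sadE, Finset.nonempty_iff_ne_empty.1 hJne]
    have h1 : insert k (J₀.erase k) = J₀ := Finset.insert_erase hkJ₀
    rw [hE, Finset.erase_insert hnotin, h1, Finset.insert_erase hJ₀P]
lemma sadikovaLambda_eq_zero {m : ℕ} (hm : 2 ≤ m) (k : Fin m) {h : (Fin m → ℝ) → ℂ}
    (h0 : h 0 = 1) {t : Fin m → ℝ} (ht : t k = 0) : sadikovaLambda h t = 0 := by
  classical
  set f : Finset (Finset (Fin m)) → ℂ := fun P =>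
    (-1 : ℂ) ^ (P.card - 1) * (Nat.factorial (P.card - 1) : ℂ) *
      ∏ J ∈ P, h fun l => if l ∈ J then t l else 0 with hf
  have key : ∑ P ∈ setPartitions m, f P
      = ∑ x ∈ (finParts m (Finset.univ.erase k)).sigma
          (fun Q => insert (∅ : Finset (Fin m)) Q), f (sadE k x) := by
    refine Finset.sum_nbij' (sadR k) (sadE k) ?_ ?_ ?_ ?_ ?_
    · intro P hP; exact sadR_mem hP
    · rintro ⟨Q, J⟩ hx
      rw [Finset.mem_sigma] at hx
      exact sadE_mem hx.1 hx.2
    · intro P hP; exact sadE_sadR hP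
    · rintro ⟨Q, J⟩ hx
      rw [Finset.mem_sigma] at hx
      exact sadR_sadE hx.1 hx.2
    · intro P hP
      rw [sadE_sadR hP]
  rw [sadikovaLambda]
  show ∑ P ∈ setPartitions m, f P = 0
  rw [key, Finset.sum_sigma]
  refine Finset.sum_eq_zero ?_
  intro Q hQ
  obtain ⟨hQ0, hQd, hQu⟩ := mem_finParts.1 hQ
  -- Q is nonempty
  have hQne : Q.Nonempty := by
    rcases Finset.eq_empty_or_nonempty Q with rfl | h
    · exfalso
      have h1 : (Finset.univ.erase k : Finset (Fin m)).card = m - 1 := by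
        rw [Finset.card_erase_of_mem (Finset.mem_univ k), Finset.card_univ, Fintype.card_fin]
      have h2 : (Finset.univ.erase k : Finset (Fin m)) = ∅ := by
        simpa using hQu.symm
      rw [h2, Finset.card_empty] at h1
      omega
    · exact h
  obtain ⟨q', hq'⟩ : ∃ q', Q.card = q' + 1 :=
    ⟨Q.card - 1, by have := Finset.card_pos.2 hQne; omega⟩
  rw [Finset.sum_insert hQ0]
  -- the common product W
  set W : ℂ := ∏ J ∈ Q, h fun l => if l ∈ J then t l else 0 with hW
  have hkQ : ({k} : Finset (Fin m)) ∉ Q := fun hc =>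
    notMem_of_mem_finParts_erase hQ hc (Finset.mem_singleton_self k)
  -- value of the empty-choice term
  have hv0 : f (sadE k ⟨Q, ∅⟩) = (-1 : ℂ) ^ Q.card * (Nat.factorial Q.card : ℂ) * W := by
    have hE : sadE k ⟨Q, (∅ : Finset (Fin m))⟩ = insert {k} Q := by simp [sadE]
    rw [hE, hf]
    have hcard : (insert ({k} : Finset (Fin m)) Q).card = Q.card + 1 :=
      Finset.card_insert_of_notMem hkQ
    have hprod : ∏ J ∈ insert ({k} : Finset (Fin m)) Q, (h fun l => if l ∈ J then t l else 0)
        = W := by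
      rw [Finset.prod_insert hkQ]
      have : (fun l => if l ∈ ({k} : Finset (Fin m)) then t l else 0) = (0 : Fin m → ℝ) := by
        funext l
        by_cases hl : l = k
        · subst hl; simp [ht]
        · simp [hl, Finset.mem_singleton]
      rw [this, h0, one_mul]
    dsimp only
    rw [hprod, hcard]
    simp
  -- value of the other terms
  have hv1 : ∀ J ∈ Q, f (sadE k ⟨Q, J⟩)
      = (-1 : ℂ) ^ (Q.card - 1) * (Nat.factorial (Q.card - 1) : ℂ) * W := by
    intro J hJQ
    have hJne : J ≠ ∅ := fun hc => hQ0 (hc ▸ hJQ)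
    have hkJ : k ∉ J := notMem_of_mem_finParts_erase hQ hJQ
    have hE : sadE k ⟨Q, J⟩ = insert (insert k J) (Q.erase J) := by
      simp [sadE, if_neg hJne]
    have hkin : insert k J ∉ Q.erase J := fun hc =>
      notMem_of_mem_finParts_erase hQ (Finset.mem_of_mem_erase hc) (Finset.mem_insert_self _ _)
    have hcard : (insert (insert k J) (Q.erase J)).card = Q.card := by
      rw [Finset.card_insert_of_notMem hkin, Finset.card_erase_of_mem hJQ]
      omega
    have hψ : (fun l => if l ∈ insert k J then t l else 0)
        = (fun l => if l ∈ J then t l else 0) := by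
      funext l
      by_cases hl : l = k
      · subst hl; simp [ht, hkJ]
      · simp [Finset.mem_insert, hl]
    have hprod : ∏ K ∈ insert (insert k J) (Q.erase J), (h fun l => if l ∈ K then t l else 0)
        = W := by
      rw [Finset.prod_insert hkin, hψ, hW, ← Finset.mul_prod_erase Q _ hJQ]
    rw [hE, hf]
    dsimp only
    rw [hprod, hcard]
  rw [hv0, Finset.sum_congr rfl hv1, Finset.sum_const, hq']
  simp only [Nat.add_sub_cancel, nsmul_eq_mul]
  push_cast [Nat.factorial_succ]
  ring
lemma norm_exp_I_mul (b : ℝ) : ‖Complex.exp (Complex.I * b)‖ = 1 := by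
  rw [Complex.norm_exp]; simp

lemma norm_exp_I_mul_sub_le (a b : ℝ) :
    ‖Complex.exp (Complex.I * a) - Complex.exp (Complex.I * b)‖ ≤ 2 * |a - b| := by
  have h1 : Complex.exp (Complex.I * a) - Complex.exp (Complex.I * b)
      = Complex.exp (Complex.I * b) * (Complex.exp (Complex.I * (a - b)) - 1) := by
    rw [mul_sub, ← Complex.exp_add, mul_one]; ring_nf
  rw [h1, norm_mul, norm_exp_I_mul, one_mul]
  have habs : ‖Complex.I * (a - b)‖ = |a - b| := by
    rw [norm_mul, Complex.norm_I, one_mul, ← Complex.ofReal_sub, Complex.norm_real, Real.norm_eq_abs]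
  rcases le_total |a - b| 1 with h | h
  · have := Complex.norm_exp_sub_one_le (x := Complex.I * (a - b)) (by rw [habs]; exact h)
    rw [habs] at this
    simpa using this
  · have h2 : ‖Complex.exp (Complex.I * ((a : ℂ) - b)) - 1‖ ≤ 2 := by
      refine (norm_sub_le _ _).trans ?_
      have h3 : ‖Complex.exp (Complex.I * ((a : ℂ) - b))‖ = 1 := by
        rw [← Complex.ofReal_sub]; exact norm_exp_I_mul (a - b)
      rw [h3]; norm_num
    push_cast at h2 ⊢
    refine h2.trans (by linarith)

section CharFn
variable {Ω : Type*} [MeasurableSpace Ω] (μ : Measure Ω) [IsProbabilityMeasure μ]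
  {m : ℕ} {Z : Ω → Fin m → ℝ}

lemma exp_sum_eq (s : Fin m → ℝ) (z : Fin m → ℝ) :
    (∑ k, (s k : ℂ) * (z k : ℂ)) = ((∑ k, s k * z k : ℝ) : ℂ) := by
  push_cast; rfl

lemma measurable_exp_char (hZ : Measurable Z) (s : Fin m → ℝ) :
    Measurable fun ω => Complex.exp (Complex.I * ∑ k, (s k : ℂ) * (Z ω k : ℂ)) := by
  refine Complex.measurable_exp.comp (Measurable.const_mul ?_ _)
  refine Finset.measurable_sum _ fun l _ => ?_
  exact (Complex.measurable_ofReal.comp ((measurable_pi_apply l).comp hZ)).const_mul _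

lemma integrable_exp_char (hZ : Measurable Z) (s : Fin m → ℝ) :
    Integrable (fun ω => Complex.exp (Complex.I * ∑ k, (s k : ℂ) * (Z ω k : ℂ))) μ := by
  refine Integrable.mono' (integrable_const 1) (measurable_exp_char hZ s).aestronglyMeasurable
    (Filter.Eventually.of_forall fun ω => ?_)
  rw [exp_sum_eq, norm_exp_I_mul]

lemma norm_charFn_le_one (Z : Ω → Fin m → ℝ) (s : Fin m → ℝ) : ‖charFn μ Z s‖ ≤ 1 := by
  rw [charFn]
  refine (norm_integral_le_of_norm_le_const (C := 1)
    (Filter.Eventually.of_forall fun ω => ?_)).trans (by simp)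
  rw [exp_sum_eq, norm_exp_I_mul]

lemma norm_charFn_sub_update_le (hZ : Measurable Z) (hZint : Integrable Z μ)
    (s : Fin m → ℝ) (k : Fin m) :
    ‖charFn μ Z s - charFn μ Z (Function.update s k 0)‖
      ≤ 2 * |s k| * ∫ ω, ‖Z ω‖ ∂μ := by
  rw [charFn, charFn, ← integral_sub (integrable_exp_char μ hZ s)
    (integrable_exp_char μ hZ (Function.update s k 0))]
  refine (norm_integral_le_integral_norm _).trans ?_
  have hbd : ∀ ω, ‖Complex.exp (Complex.I * ∑ l, (s l : ℂ) * (Z ω l : ℂ))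
      - Complex.exp (Complex.I * ∑ l, ((Function.update s k 0) l : ℂ) * (Z ω l : ℂ))‖
      ≤ 2 * |s k| * ‖Z ω‖ := by
    intro ω
    rw [exp_sum_eq, exp_sum_eq]
    refine (norm_exp_I_mul_sub_le _ _).trans ?_
    have hdiff : (∑ l, s l * Z ω l) - (∑ l, (Function.update s k 0) l * Z ω l)
        = s k * Z ω k := by
      rw [← Finset.sum_sub_distrib]
      rw [Finset.sum_eq_single k]
      · simp [Function.update_self]
      · intro l _ hl
        rw [Function.update_of_ne hl]; ring
      · simp
    rw [hdiff, abs_mul, mul_assoc]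
    have : |Z ω k| ≤ ‖Z ω‖ := by
      simpa [Real.norm_eq_abs] using norm_le_pi_norm (Z ω) k
    have h2 : |s k| * |Z ω k| ≤ |s k| * ‖Z ω‖ :=
      mul_le_mul_of_nonneg_left this (abs_nonneg _)
    linarith
  refine (integral_mono ((integrable_exp_char μ hZ s).sub
    (integrable_exp_char μ hZ (Function.update s k 0))).norm
    ((hZint.norm.const_mul (2 * |s k|))) (fun ω => hbd ω)).trans ?_
  rw [MeasureTheory.integral_const_mul]

end CharFn
noncomputable def sadC (m : ℕ) : ℝ :=
  ∑ P ∈ setPartitions m, (Nat.factorial (P.card - 1) : ℝ)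

lemma sadC_nonneg (m : ℕ) : 0 ≤ sadC m :=
  Finset.sum_nonneg fun _ _ => by positivity

lemma norm_sadikovaLambda_le {m : ℕ} {h : (Fin m → ℝ) → ℂ} (hb : ∀ s, ‖h s‖ ≤ 1)
    (t : Fin m → ℝ) : ‖sadikovaLambda h t‖ ≤ sadC m := by
  rw [sadikovaLambda, sadC]
  refine (norm_sum_le _ _).trans (Finset.sum_le_sum fun P _ => ?_)
  rw [norm_mul, norm_mul, norm_pow, norm_neg, norm_one, one_pow, one_mul]
  have h1 : ‖((Nat.factorial (P.card - 1) : ℂ))‖ = (Nat.factorial (P.card - 1) : ℝ) := by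
    simp
  rw [h1]
  have h2 : ‖∏ J ∈ P, h fun l => if l ∈ J then t l else 0‖ ≤ 1 := by
    rw [norm_prod]
    exact Finset.prod_le_one (fun _ _ => norm_nonneg _) (fun J _ => hb _)
  nlinarith [Nat.cast_nonneg (α := ℝ) (Nat.factorial (P.card - 1))]

lemma norm_sadikovaLambda_sub_update_le {Ω : Type*} [MeasurableSpace Ω] (μ : Measure Ω)
    [IsProbabilityMeasure μ] {m : ℕ} {Z : Ω → Fin m → ℝ} (hZ : Measurable Z)
    (hZint : Integrable Z μ) (t : Fin m → ℝ) (k : Fin m) :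
    ‖sadikovaLambda (charFn μ Z) t - sadikovaLambda (charFn μ Z) (Function.update t k 0)‖
      ≤ sadC m * (2 * |t k| * ∫ ω, ‖Z ω‖ ∂μ) := by
  classical
  rw [sadikovaLambda, sadikovaLambda, ← Finset.sum_sub_distrib]
  rw [sadC, Finset.sum_mul]
  refine (norm_sum_le _ _).trans (Finset.sum_le_sum fun P hP => ?_)
  rw [setPartitions_eq] at hP
  obtain ⟨hP0, hPd, hPu⟩ := mem_finParts.1 hP
  obtain ⟨J₀, hJ₀P, hkJ₀'⟩ := Finset.mem_biUnion.1 (hPu ▸ Finset.mem_univ k)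
  have hkJ₀ : k ∈ J₀ := hkJ₀'
  set a : Finset (Fin m) → ℂ := fun J => charFn μ Z fun l => if l ∈ J then t l else 0 with ha
  set b : Finset (Fin m) → ℂ :=
    fun J => charFn μ Z fun l => if l ∈ J then (Function.update t k 0) l else 0 with hb
  have hab : ∀ J ∈ P.erase J₀, a J = b J := by
    intro J hJ
    have hkJ : k ∉ J := fun hkJ => Finset.disjoint_left.1
      (hPd J (Finset.mem_of_mem_erase hJ) J₀ hJ₀P (Finset.ne_of_mem_erase hJ)) hkJ hkJ₀
    have : (fun l => if l ∈ J then t l else 0)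
        = (fun l => if l ∈ J then (Function.update t k 0) l else 0) := by
      funext l
      by_cases hl : l ∈ J
      · rw [if_pos hl, if_pos hl, Function.update_of_ne (fun hc => hkJ (by rw [← hc]; exact hl))]
      · rw [if_neg hl, if_neg hl]
    simp only [ha, hb]
    rw [this]
  have hsplit : (∏ J ∈ P, a J) - (∏ J ∈ P, b J)
      = (a J₀ - b J₀) * ∏ J ∈ P.erase J₀, a J := by
    rw [← Finset.mul_prod_erase P a hJ₀P, ← Finset.mul_prod_erase P b hJ₀P,
      Finset.prod_congr rfl fun J hJ => (hab J hJ).symm, sub_mul]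
  have hupd : (fun l => if l ∈ J₀ then (Function.update t k 0) l else 0)
      = Function.update (fun l => if l ∈ J₀ then t l else 0) k 0 := by
    funext l
    by_cases hl : l = k
    · subst hl; rw [if_pos hkJ₀, Function.update_self, Function.update_self]
    · rw [Function.update_of_ne hl, Function.update_of_ne hl]
  have hJ₀bound : ‖a J₀ - b J₀‖ ≤ 2 * |t k| * ∫ ω, ‖Z ω‖ ∂μ := by
    rw [ha, hb]
    dsimp only
    rw [hupd]
    have := norm_charFn_sub_update_le μ hZ hZint (fun l => if l ∈ J₀ then t l else 0) k
    rwa [if_pos hkJ₀] at this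
  have hprodle : ‖∏ J ∈ P.erase J₀, a J‖ ≤ 1 := by
    rw [norm_prod]
    exact Finset.prod_le_one (fun _ _ => norm_nonneg _)
      (fun J _ => norm_charFn_le_one μ Z _)
  have h1 : ‖((Nat.factorial (P.card - 1) : ℂ))‖ = (Nat.factorial (P.card - 1) : ℝ) := by simp
  rw [← mul_sub, hsplit, norm_mul, norm_mul, norm_mul, norm_pow, norm_neg, norm_one, one_pow,
    one_mul, h1]
  refine mul_le_mul_of_nonneg_left ?_ (Nat.cast_nonneg _)
  have hnn : (0 : ℝ) ≤ 2 * |t k| * ∫ ω, ‖Z ω‖ ∂μ :=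
    mul_nonneg (mul_nonneg (by norm_num) (abs_nonneg _))
      (integral_nonneg fun ω => norm_nonneg _)
  have := mul_le_mul hJ₀bound hprodle (norm_nonneg _) hnn
  simpa using this

lemma integrableOn_abs_rpow_Icc {r T : ℝ} (hr : -1 < r) (hT : 0 < T) :
    MeasureTheory.IntegrableOn (fun s : ℝ => |s| ^ r) (Set.Icc (-T) T) volume := by
  have jpos : IntervalIntegrable (fun x : ℝ => |x| ^ r) volume 0 T := by
    rw [intervalIntegrable_iff, Set.uIoc_of_le hT.le]
    refine (intervalIntegral.intervalIntegrable_rpow' (a := 0) (b := T) hr).1.congr_fun ?_ measurableSet_Ioc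
    intro x hx
    show x ^ r = |x| ^ r
    rw [abs_of_pos hx.1]
  have jneg : IntervalIntegrable (fun x : ℝ => |x| ^ r) volume (-T) 0 := by
    rw [IntervalIntegrable.iff_comp_neg]
    have : (fun x : ℝ => |(-x)| ^ r) = fun x : ℝ => |x| ^ r := by
      funext x; rw [abs_neg]
    rw [this, neg_neg, neg_zero]
    exact jpos.symm
  have := jneg.trans jpos
  rwa [intervalIntegrable_iff_integrableOn_Icc_of_le (by linarith)] at this
lemma charFn_zero {Ω : Type*} [MeasurableSpace Ω] (μ : Measure Ω) [IsProbabilityMeasure μ]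
    {m : ℕ} (Z : Ω → Fin m → ℝ) : charFn μ Z (0 : Fin m → ℝ) = 1 := by
  rw [charFn]
  have : (fun ω => Complex.exp (Complex.I * ∑ k, (((0 : Fin m → ℝ)) k : ℂ) * (Z ω k : ℂ)))
      = fun _ => (1 : ℂ) := by
    funext ω; simp
  rw [this, integral_const]
  simp

lemma sadikovaLambda_zero_eq {m : ℕ} {h h' : (Fin m → ℝ) → ℂ} (h0 : h 0 = 1)
    (h0' : h' 0 = 1) : sadikovaLambda h 0 = sadikovaLambda h' 0 := by
  rw [sadikovaLambda, sadikovaLambda]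
  refine Finset.sum_congr rfl fun P _ => ?_
  have key : ∀ g : (Fin m → ℝ) → ℂ, g 0 = 1 →
      ∏ J ∈ P, g (fun l => if l ∈ J then (0 : Fin m → ℝ) l else 0) = 1 := by
    intro g hg
    refine Finset.prod_eq_one fun J _ => ?_
    have : (fun l => if l ∈ J then (0 : Fin m → ℝ) l else 0) = (0 : Fin m → ℝ) := by
      funext l; by_cases hl : l ∈ J <;> simp [hl]
    rw [this, hg]
  rw [key h h0, key h' h0']

section Main

variable {Ω₁ Ω₂ : Type*} [MeasurableSpace Ω₁] [MeasurableSpace Ω₂]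
  (μ : Measure Ω₁) [IsProbabilityMeasure μ] (ν : Measure Ω₂) [IsProbabilityMeasure ν]
  {m : ℕ} (X : Ω₁ → Fin m → ℝ) (Y : Ω₂ → Fin m → ℝ)

lemma sadikova_sub_eq_zero (hm : 1 ≤ m) {t : Fin m → ℝ} (k : Fin m) (ht : t k = 0) :
    sadikovaLambda (charFn μ X) t - sadikovaLambda (charFn ν Y) t = 0 := by
  by_cases h2 : 2 ≤ m
  · rw [sadikovaLambda_eq_zero h2 k (charFn_zero μ X) ht,
      sadikovaLambda_eq_zero h2 k (charFn_zero ν Y) ht, sub_zero]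
  · have hm1 : m = 1 := by omega
    subst hm1
    have htz : t = 0 := by
      funext l
      have hlk : l = k := Subsingleton.elim l k
      rw [hlk]; exact ht
    rw [htz, sadikovaLambda_zero_eq (charFn_zero μ X) (charFn_zero ν Y), sub_self]

end Main

/-- **Finiteness of the integral in the `m`-dimensional Berry–Esseen inequality**
(last assertion of Theorem 4 of Heuberger–Kropf): if both `E(X)` and `E(Y)` exist,
i.e. `X` and `Y` are integrable, then for every `T > 0` the integral
`∫_{‖t‖ ≤ T} |(Λ(φ_X)(t) - Λ(φ_Y)(t)) / (t₁⋯t_m)| dt` is finite. -/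
theorem berry_esseen_integral_finite
    {Ω₁ Ω₂ : Type*} [MeasurableSpace Ω₁] [MeasurableSpace Ω₂]
    (μ : Measure Ω₁) [IsProbabilityMeasure μ]
    (ν : Measure Ω₂) [IsProbabilityMeasure ν]
    (m : ℕ) (hm : 1 ≤ m)
    (X : Ω₁ → Fin m → ℝ) (Y : Ω₂ → Fin m → ℝ)
    (hX : Measurable X) (hY : Measurable Y)
    (hXint : Integrable X μ) (hYint : Integrable Y ν)
    (T : ℝ) (hT : 0 < T) :
    (∫⁻ t in {t : Fin m → ℝ | ‖t‖ ≤ T},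
        (‖(sadikovaLambda (charFn μ X) t - sadikovaLambda (charFn ν Y) t)
            / (∏ ℓ, (t ℓ : ℂ))‖₊ : ENNReal)) < ⊤ := by
  classical
  set DX : (Fin m → ℝ) → ℂ := sadikovaLambda (charFn μ X) with hDX
  set DY : (Fin m → ℝ) → ℂ := sadikovaLambda (charFn ν Y) with hDY
  set IX : ℝ := ∫ ω, ‖X ω‖ ∂μ with hIX
  set IY : ℝ := ∫ ω, ‖Y ω‖ ∂ν with hIY
  have hIX0 : 0 ≤ IX := integral_nonneg fun ω => norm_nonneg _
  have hIY0 : 0 ≤ IY := integral_nonneg fun ω => norm_nonneg _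
  set L : ℝ := 2 * sadC m * (IX + IY) with hL
  have hL0 : 0 ≤ L := by
    have := sadC_nonneg m
    nlinarith
  have hm0 : (0 : ℝ) < m := by
    have : (1 : ℝ) ≤ (m : ℝ) := by exact_mod_cast hm
    linarith
  -- coordinatewise Lipschitz bound
  have hDk : ∀ (t : Fin m → ℝ) (k : Fin m), ‖DX t - DY t‖ ≤ L * |t k| := by
    intro t k
    have e0 : DX (Function.update t k 0) - DY (Function.update t k 0) = 0 :=
      sadikova_sub_eq_zero μ ν X Y hm k (Function.update_self k 0 t)
    have hsplit : DX t - DY t = (DX t - DX (Function.update t k 0))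
        - (DY t - DY (Function.update t k 0))
        + (DX (Function.update t k 0) - DY (Function.update t k 0)) := by ring
    rw [hsplit, e0, add_zero]
    have b1 := norm_sadikovaLambda_sub_update_le μ hX hXint t k
    have b2 := norm_sadikovaLambda_sub_update_le ν hY hYint t k
    refine (norm_sub_le _ _).trans ?_
    have : sadC m * (2 * |t k| * IX) + sadC m * (2 * |t k| * IY) = L * |t k| := by
      rw [hL]; ring
    rw [← this]
    exact add_le_add b1 b2
  set r : ℝ := 1 / (m : ℝ) - 1 with hr'
  have hr : -1 < r := by
    have : 0 < 1 / (m : ℝ) := by positivity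
    rw [hr']; linarith
  set g : ℝ → ℝ := fun s => L ^ ((1 : ℝ) / m) * |s| ^ r with hg
  have hg0 : ∀ s, 0 ≤ g s := fun s =>
    mul_nonneg (Real.rpow_nonneg hL0 _) (Real.rpow_nonneg (abs_nonneg _) _)
  set g1 : ℝ → ℝ := (Set.Icc (-T) T).indicator g with hg1
  -- pointwise bound
  have claim : ∀ t : Fin m → ℝ,
      (‖(DX t - DY t) / (∏ ℓ, (t ℓ : ℂ))‖₊ : ℝ≥0∞)
        ≤ ∏ k, ENNReal.ofReal (g (t k)) := by
    intro t
    by_cases hz : ∃ l, t l = 0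
    · obtain ⟨l, hl⟩ := hz
      rw [sadikova_sub_eq_zero μ ν X Y hm l hl, zero_div, nnnorm_zero]
      simp
    · push_neg at hz
      have habs : ∀ l, 0 < |t l| := fun l => abs_pos.2 (hz l)
      have step1 : ‖DX t - DY t‖ ^ m ≤ ∏ k, (L * |t k|) := by
        have hpc : ‖DX t - DY t‖ ^ m = ∏ _k : Fin m, ‖DX t - DY t‖ := by
          rw [Finset.prod_const, Finset.card_univ, Fintype.card_fin]
        rw [hpc]
        exact Finset.prod_le_prod (fun _ _ => norm_nonneg _) (fun k _ => hDk t k)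
      have step2 : ‖DX t - DY t‖ ≤ ∏ k, (L * |t k|) ^ ((1 : ℝ) / m) := by
        have h1 : ‖DX t - DY t‖ = (‖DX t - DY t‖ ^ m) ^ ((1 : ℝ) / m) := by
          rw [← Real.rpow_natCast (‖DX t - DY t‖) m, ← Real.rpow_mul (norm_nonneg _),
            mul_one_div, div_self (ne_of_gt hm0), Real.rpow_one]
        rw [h1, Real.finset_prod_rpow _ _ (fun k _ => mul_nonneg hL0 (abs_nonneg _)) _]
        exact Real.rpow_le_rpow (pow_nonneg (norm_nonneg _) m) step1 (by positivity)
      have hnq : ‖(DX t - DY t) / (∏ ℓ, (t ℓ : ℂ))‖ = ‖DX t - DY t‖ / ∏ ℓ, |t ℓ| := by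
        rw [norm_div, norm_prod]
        congr 1
        refine Finset.prod_congr rfl fun l _ => ?_
        rw [Complex.norm_real, Real.norm_eq_abs]
      have hfac : ∀ k : Fin m, (L * |t k|) ^ ((1 : ℝ) / m) = g (t k) * |t k| := by
        intro k
        rw [Real.mul_rpow hL0 (abs_nonneg _), hg]
        have : |t k| ^ ((1 : ℝ) / m) = |t k| ^ r * |t k| := by
          have hre : (1 : ℝ) / m = r + 1 := by rw [hr']; ring
          rw [hre, Real.rpow_add (habs k), Real.rpow_one]
        rw [this]; ring
      have hfinal : ‖(DX t - DY t) / (∏ ℓ, (t ℓ : ℂ))‖ ≤ ∏ k, g (t k) := by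
        rw [hnq, div_le_iff₀ (Finset.prod_pos fun l _ => habs l)]
        refine step2.trans (le_of_eq ?_)
        rw [← Finset.prod_mul_distrib]
        exact Finset.prod_congr rfl fun k _ => hfac k
      calc (‖(DX t - DY t) / (∏ ℓ, (t ℓ : ℂ))‖₊ : ℝ≥0∞)
          = ENNReal.ofReal ‖(DX t - DY t) / (∏ ℓ, (t ℓ : ℂ))‖ :=
            (ofReal_norm_eq_enorm _).symm
        _ ≤ ENNReal.ofReal (∏ k, g (t k)) := ENNReal.ofReal_le_ofReal hfinal
        _ = ∏ k, ENNReal.ofReal (g (t k)) :=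
            ENNReal.ofReal_prod_of_nonneg (fun k _ => hg0 _)
  -- integrability of the one-dimensional majorant
  have hint1 : Integrable g1 volume := by
    rw [hg1, integrable_indicator_iff measurableSet_Icc]
    exact (integrableOn_abs_rpow_Icc hr hT).const_mul _
  have hfin : ∫⁻ t : Fin m → ℝ, (‖∏ k, g1 (t k)‖₊ : ℝ≥0∞) < ⊤ :=
    (Integrable.fintype_prod (f := fun _ : Fin m => g1) (fun _ => hint1)).2
  refine lt_of_le_of_lt ?_ hfin
  have hSmeas : MeasurableSet {t : Fin m → ℝ | ‖t‖ ≤ T} :=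
    measurableSet_le continuous_norm.measurable measurable_const
  calc ∫⁻ t in {t : Fin m → ℝ | ‖t‖ ≤ T}, (‖(DX t - DY t) / (∏ ℓ, (t ℓ : ℂ))‖₊ : ℝ≥0∞)
      ≤ ∫⁻ t in {t : Fin m → ℝ | ‖t‖ ≤ T}, ∏ k, (‖g1 (t k)‖₊ : ℝ≥0∞) := by
        refine setLIntegral_mono' hSmeas fun t htS => ?_
        refine (claim t).trans (le_of_eq (Finset.prod_congr rfl fun k _ => ?_))
        have htk : t k ∈ Set.Icc (-T) T := by
          have h1 : |t k| ≤ ‖t‖ := by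
            simpa [Real.norm_eq_abs] using norm_le_pi_norm t k
          have h2 : |t k| ≤ T := h1.trans htS
          exact abs_le.1 h2
        rw [hg1, Set.indicator_of_mem htk]; exact (Real.enorm_eq_ofReal (hg0 _)).symm
    _ ≤ ∫⁻ t : Fin m → ℝ, ∏ k, (‖g1 (t k)‖₊ : ℝ≥0∞) := setLIntegral_le_lintegral _ _
    _ = ∫⁻ t : Fin m → ℝ, (‖∏ k, g1 (t k)‖₊ : ℝ≥0∞) := by
        refine lintegral_congr fun t => ?_
        rw [nnnorm_prod, ENNReal.coe_finset_prod]
end
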